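/- Let Γ be a cost function for cluster trees of the form Γ(T) = Σ over internal nodes N with children N1, N2 of w(V(N1),V(N2))·g(|V(N1)|,|V(N2)|), for some function g: ℕ×ℕ → ℝ₊. Then Γ is admissible — i.e., for every similarity graph G generated from a minimal ultrametric, a cluster tree for G attains the minimum of Γ if and only if it is a generating tree for G — if and only if the following three conditions hold: (1) for every unit-weight clique (complete graph with all edge weights 1), all cluster trees have the same Γ-cost; (2) g(n1,n2) = g(n2,n1) for all n1,n2 ∈ ℕ; (3) g(n1+1,n2) > g(n1,n2) for all n1,n2 ∈ ℕ. -/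

import Mathlib

open scoped BigOperators

attribute [local instance] Classical.propDecidable

noncomputable section

/-! ### Cluster trees -/

/-- A (binary, rooted) hierarchical-clustering tree whose leaves are labelled by
vertices of `V`. -/
inductive ClusterTree (V : Type) : Type where
  | leaf : V → ClusterTree V
  | node : ClusterTree V → ClusterTree V → ClusterTree V

namespace ClusterTree

variable {V : Type}

/-- The list of leaf labels of the tree (left-to-right). -/
def leavesList : ClusterTree V → List V
  | leaf v => [v]
  | node L R => leavesList L ++ leavesList R

/-- The set of leaf labels of the tree. -/
def leaves [DecidableEq V] (T : ClusterTree V) : Finset V :=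
  T.leavesList.toFinset

end ClusterTree

section Defs

variable {V : Type}

/-- `T` is a cluster tree for the whole (finite) vertex set `V`: its leaves are
pairwise distinct and exhaust the vertices. -/
def IsClusterTree [DecidableEq V] [Fintype V] (T : ClusterTree V) : Prop :=
  T.leavesList.Nodup ∧ T.leaves = Finset.univ

/-- `IsSubtreeOf s T` : `s` occurs as a rooted subtree of `T`. -/
def IsSubtreeOf : ClusterTree V → ClusterTree V → Prop
  | s, ClusterTree.leaf v => s = ClusterTree.leaf v
  | s, ClusterTree.node L R => s = ClusterTree.node L R ∨ IsSubtreeOf s L ∨ IsSubtreeOf s R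

/-- The subtree of `T` rooted at the lowest common ancestor of the leaves `x` and `y`. -/
def lcaSubtree [DecidableEq V] : ClusterTree V → V → V → ClusterTree V
  | ClusterTree.leaf v, _, _ => ClusterTree.leaf v
  | ClusterTree.node L R, x, y =>
    if x ∈ L.leaves ∧ y ∈ L.leaves then lcaSubtree L x y
    else if x ∈ R.leaves ∧ y ∈ R.leaves then lcaSubtree R x y
    else ClusterTree.node L R

/-- `w(A, B) = ∑_{a ∈ A, b ∈ B} w a b`. -/
def cutWeight (w : V → V → ℝ) (A B : Finset V) : ℝ := ∑ a ∈ A, ∑ b ∈ B, w a b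

/-- `w(A) = ∑_{a, b ∈ A} w a b` (ordered pairs; each edge counted twice). -/
def innerWeight (w : V → V → ℝ) (A : Finset V) : ℝ := ∑ a ∈ A, ∑ b ∈ A, w a b

/-- `∑_{e ∈ E} w(e)`, for a symmetric weight function with zero diagonal. -/
def totalWeight [Fintype V] (w : V → V → ℝ) : ℝ := (∑ u : V, ∑ v : V, w u v) / 2

/-- Cost of a cluster tree: each internal node `N` with children `N₁, N₂`
contributes `w(V(N₁), V(N₂)) · g(|V(N₁)|, |V(N₂)|)`. -/
def treeCost [DecidableEq V] (w : V → V → ℝ) (g : ℕ → ℕ → ℝ) : ClusterTree V → ℝ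
  | ClusterTree.leaf _ => 0
  | ClusterTree.node L R =>
      cutWeight w L.leaves R.leaves * g L.leaves.card R.leaves.card
        + treeCost w g L + treeCost w g R

/-- Dasgupta's cost (= `treeCost` with `g (a, b) = a + b`). -/
def dasguptaCost [DecidableEq V] (w : V → V → ℝ) : ClusterTree V → ℝ
  | ClusterTree.leaf _ => 0
  | ClusterTree.node L R =>
      ((L.leaves.card + R.leaves.card : ℕ) : ℝ) * cutWeight w L.leaves R.leaves
        + dasguptaCost w L + dasguptaCost w R

/-! ### Generating trees -/

/-- `T` is a generating tree for the similarity graph `w` : there is a nonnegative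
weight function on the internal nodes, non-increasing from leaves towards the root,
realizing every edge weight at the corresponding LCA. -/
def IsGenerating [DecidableEq V] (w : V → V → ℝ) (T : ClusterTree V) : Prop :=
  ∃ W : ClusterTree V → ℝ,
    (∀ s, IsSubtreeOf s T → 0 ≤ W s) ∧
    (∀ L R, IsSubtreeOf (ClusterTree.node L R) T →
      ∀ s, IsSubtreeOf s L ∨ IsSubtreeOf s R → W (ClusterTree.node L R) ≤ W s) ∧
    (∀ x y, x ∈ T.leaves → y ∈ T.leaves → x ≠ y → w x y = W (lcaSubtree T x y))

/-- Generating tree in the dissimilarity setting (weights non-decreasing from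
leaves towards the root). -/
def IsGeneratingDissim [DecidableEq V] (w : V → V → ℝ) (T : ClusterTree V) : Prop :=
  ∃ W : ClusterTree V → ℝ,
    (∀ s, IsSubtreeOf s T → 0 ≤ W s) ∧
    (∀ L R, IsSubtreeOf (ClusterTree.node L R) T →
      ∀ s, IsSubtreeOf s L ∨ IsSubtreeOf s R → W s ≤ W (ClusterTree.node L R)) ∧
    (∀ x y, x ∈ T.leaves → y ∈ T.leaves → x ≠ y → w x y = W (lcaSubtree T x y))

/-- Strictly generating tree (similarity setting). -/
def IsStrictlyGenerating [DecidableEq V] (w : V → V → ℝ) (T : ClusterTree V) : Prop :=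
  ∃ W : ClusterTree V → ℝ,
    (∀ s, IsSubtreeOf s T → 0 ≤ W s) ∧
    (∀ L R, IsSubtreeOf (ClusterTree.node L R) T →
      ∀ s, IsSubtreeOf s L ∨ IsSubtreeOf s R → W (ClusterTree.node L R) < W s) ∧
    (∀ x y, x ∈ T.leaves → y ∈ T.leaves → x ≠ y → w x y = W (lcaSubtree T x y))

/-- Strictly generating tree (dissimilarity setting). -/
def IsStrictlyGeneratingDissim [DecidableEq V] (w : V → V → ℝ) (T : ClusterTree V) : Prop :=
  ∃ W : ClusterTree V → ℝ,
    (∀ s, IsSubtreeOf s T → 0 ≤ W s) ∧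
    (∀ L R, IsSubtreeOf (ClusterTree.node L R) T →
      ∀ s, IsSubtreeOf s L ∨ IsSubtreeOf s R → W s < W (ClusterTree.node L R)) ∧
    (∀ x y, x ∈ T.leaves → y ∈ T.leaves → x ≠ y → w x y = W (lcaSubtree T x y))

/-! ### Ultrametrics and ground-truth inputs -/

/-- `d` is an ultrametric on `V`. -/
def IsUltrametric (d : V → V → ℝ) : Prop :=
  (∀ x, d x x = 0) ∧ (∀ x y, d x y = 0 → x = y) ∧ (∀ x y, d x y = d y x) ∧
  (∀ x y, 0 ≤ d x y) ∧ (∀ x y z, d x y ≤ max (d x z) (d y z))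

/-- `w` is a similarity graph generated from an ultrametric via a
non-increasing nonnegative function `f`. -/
def GeneratedFromUltrametric (w : V → V → ℝ) : Prop :=
  ∃ (d : V → V → ℝ) (f : ℝ → ℝ),
    IsUltrametric d ∧
    (∀ a b : ℝ, 0 ≤ a → a ≤ b → f b ≤ f a) ∧
    (∀ a : ℝ, 0 ≤ a → 0 ≤ f a) ∧
    (∀ x y : V, x ≠ y → w x y = f (d x y))

/-- `w` is a dissimilarity graph generated from an ultrametric via a
non-decreasing nonnegative function `f`. -/
def GeneratedFromUltrametricDissim (w : V → V → ℝ) : Prop :=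
  ∃ (d : V → V → ℝ) (f : ℝ → ℝ),
    IsUltrametric d ∧
    (∀ a b : ℝ, 0 ≤ a → a ≤ b → f a ≤ f b) ∧
    (∀ a : ℝ, 0 ≤ a → 0 ≤ f a) ∧
    (∀ x y : V, x ≠ y → w x y = f (d x y))

/-- `w` is a similarity graph generated from a *minimal* ultrametric:
pairs with equal weights are at equal ultrametric distance. -/
def GeneratedFromMinimalUltrametric (w : V → V → ℝ) : Prop :=
  ∃ (d : V → V → ℝ) (f : ℝ → ℝ),
    IsUltrametric d ∧
    (∀ a b : ℝ, 0 ≤ a → a ≤ b → f b ≤ f a) ∧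
    (∀ a : ℝ, 0 ≤ a → 0 ≤ f a) ∧
    (∀ x y : V, x ≠ y → w x y = f (d x y)) ∧
    (∀ u v u' v' : V, u ≠ v → u' ≠ v' → f (d u v) = f (d u' v') → d u v = d u' v')

/-- Dissimilarity analogue of `GeneratedFromMinimalUltrametric`. -/
def GeneratedFromMinimalUltrametricDissim (w : V → V → ℝ) : Prop :=
  ∃ (d : V → V → ℝ) (f : ℝ → ℝ),
    IsUltrametric d ∧
    (∀ a b : ℝ, 0 ≤ a → a ≤ b → f a ≤ f b) ∧
    (∀ a : ℝ, 0 ≤ a → 0 ≤ f a) ∧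
    (∀ x y : V, x ≠ y → w x y = f (d x y)) ∧
    (∀ u v u' v' : V, u ≠ v → u' ≠ v' → f (d u v) = f (d u' v') → d u v = d u' v')

/-- `w` is a `δ`-adversarially-perturbed (similarity) ground-truth input. -/
def IsDeltaPerturbedGroundTruth (w : V → V → ℝ) (δ : ℝ) : Prop :=
  ∃ (d : V → V → ℝ) (f : ℝ → ℝ),
    IsUltrametric d ∧
    (∀ a b : ℝ, 0 ≤ a → a ≤ b → f b ≤ f a) ∧
    (∀ a : ℝ, 0 ≤ a → 0 ≤ f a) ∧
    (∀ x y : V, x ≠ y → f (d x y) ≤ w x y ∧ w x y ≤ δ * f (d x y))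

end Defs

/-- The unit-weight clique on `V`. -/
def cliqueW (V : Type) [DecidableEq V] : V → V → ℝ := fun x y => if x = y then 0 else 1

/-- Admissibility of a cost function (similarity setting): on every similarity graph
generated from a minimal ultrametric, a cluster tree minimizes the cost
iff it is a generating tree. -/
def Admissible (g : ℕ → ℕ → ℝ) : Prop :=
  ∀ (V : Type) [Fintype V] [DecidableEq V] (w : V → V → ℝ),
    GeneratedFromMinimalUltrametric w →
    ∀ T : ClusterTree V, IsClusterTree T →
      ((∀ T' : ClusterTree V, IsClusterTree T' → treeCost w g T ≤ treeCost w g T')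
        ↔ IsGenerating w T)

/-- Admissibility of a value function (dissimilarity setting): on every dissimilarity
graph generated from a minimal ultrametric, a cluster tree maximizes the value
iff it is a generating tree. -/
def AdmissibleDissim (g : ℕ → ℕ → ℝ) : Prop :=
  ∀ (V : Type) [Fintype V] [DecidableEq V] (w : V → V → ℝ),
    GeneratedFromMinimalUltrametricDissim w →
    ∀ T : ClusterTree V, IsClusterTree T →
      ((∀ T' : ClusterTree V, IsClusterTree T' → treeCost w g T' ≤ treeCost w g T)
        ↔ IsGeneratingDissim w T)

/-! ### Agglomerative (linkage) algorithms, modelled as a nondeterministic relation -/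

/-- The initial state of an agglomerative algorithm: all singleton trees. -/
def initState (V : Type) [Fintype V] : Multiset (ClusterTree V) :=
  Finset.univ.val.map ClusterTree.leaf

/-- One merge step of a generic linkage algorithm: merge two candidate trees whose
leaf-set distance `D` is best (w.r.t. `better a b` = "`a` is at least as good as `b`")
among all candidate pairs; any tie-breaking choice is allowed. -/
inductive MergeStep {V : Type} [DecidableEq V] (D : Finset V → Finset V → ℝ)
    (better : ℝ → ℝ → Prop) :
    Multiset (ClusterTree V) → Multiset (ClusterTree V) → Prop where
  | step : ∀ (rest : Multiset (ClusterTree V)) (T1 T2 : ClusterTree V),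
      (∀ (T1' T2' : ClusterTree V) (rest' : Multiset (ClusterTree V)),
          T1 ::ₘ T2 ::ₘ rest = T1' ::ₘ T2' ::ₘ rest' →
          better (D T1.leaves T2.leaves) (D T1'.leaves T2'.leaves)) →
      MergeStep D better (T1 ::ₘ T2 ::ₘ rest) (ClusterTree.node T1 T2 ::ₘ rest)

/-- `T` is a possible output of the linkage algorithm with dissimilarity/similarity
measure `D` and preference `better`. -/
def IsLinkageOutput {V : Type} [Fintype V] [DecidableEq V]
    (D : Finset V → Finset V → ℝ) (better : ℝ → ℝ → Prop) (T : ClusterTree V) : Prop :=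
  Relation.ReflTransGen (MergeStep D better) (initState V) {T}

/-- Average-linkage measure. -/
def avgDist {V : Type} (w : V → V → ℝ) (A B : Finset V) : ℝ :=
  cutWeight w A B / ((A.card : ℝ) * (B.card : ℝ))

/-- Single-linkage measure: `min_{x ∈ A, y ∈ B} w x y`. -/
def minLinkDist {V : Type} [DecidableEq V] (w : V → V → ℝ) (A B : Finset V) : ℝ :=
  (((A ×ˢ B).image fun p => w p.1 p.2).min).untopD 0

/-- Complete-linkage measure: `max_{x ∈ A, y ∈ B} w x y`. -/
def maxLinkDist {V : Type} [DecidableEq V] (w : V → V → ℝ) (A B : Finset V) : ℝ :=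
  (((A ×ˢ B).image fun p => w p.1 p.2).max).unbotD 0

/-! ### Cuts -/

section Cuts

variable {V : Type}

/-- `A ⊕ x` : add `x` to `A` if absent, remove it if present. -/
def symmDiffV [DecidableEq V] (A : Finset V) (x : V) : Finset V :=
  if x ∈ A then A.erase x else insert x A

/-- `(A, B)` is an `ε/|A ∪ B|`-locally-densest cut of the induced subgraph on `A ∪ B`. -/
def IsLocallyDensestCut [DecidableEq V] (w : V → V → ℝ) (ε : ℝ) (A B : Finset V) : Prop :=
  ∀ x ∈ A ∪ B,
    cutWeight w (symmDiffV A x) (symmDiffV B x) /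
        (((symmDiffV A x).card : ℝ) * ((symmDiffV B x).card : ℝ)) ≤
      (1 + ε / ((A ∪ B).card : ℝ)) *
        (cutWeight w A B / ((A.card : ℝ) * (B.card : ℝ)))

/-- Cluster trees obtained by recursively splitting along `ε/n`-locally-densest cuts. -/
def IsRecLocallyDensestCutTree [DecidableEq V] (w : V → V → ℝ) (ε : ℝ) :
    ClusterTree V → Prop
  | ClusterTree.leaf _ => True
  | ClusterTree.node L R =>
      IsLocallyDensestCut w ε L.leaves R.leaves ∧
      IsRecLocallyDensestCutTree w ε L ∧ IsRecLocallyDensestCutTree w ε R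

/-- Cluster trees obtained by recursively splitting along `φ`-approximate sparsest cuts. -/
def IsRecApproxSparsestCutTree [DecidableEq V] (w : V → V → ℝ) (φ : ℝ) :
    ClusterTree V → Prop
  | ClusterTree.leaf _ => True
  | ClusterTree.node L R =>
      (∀ S : Finset V, S ⊆ L.leaves ∪ R.leaves → S.Nonempty → S ⊂ L.leaves ∪ R.leaves →
        cutWeight w L.leaves R.leaves / ((L.leaves.card : ℝ) * (R.leaves.card : ℝ)) ≤
          φ * (cutWeight w S ((L.leaves ∪ R.leaves) \ S) /
            ((S.card : ℝ) * (((L.leaves ∪ R.leaves) \ S).card : ℝ)))) ∧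
      IsRecApproxSparsestCutTree w φ L ∧ IsRecApproxSparsestCutTree w φ R

/-- Cluster trees obtained by recursively splitting along exact sparsest cuts. -/
def IsRecSparsestCutTree [DecidableEq V] (w : V → V → ℝ) : ClusterTree V → Prop
  | ClusterTree.leaf _ => True
  | ClusterTree.node L R =>
      (∀ S : Finset V, S ⊆ L.leaves ∪ R.leaves → S.Nonempty → S ⊂ L.leaves ∪ R.leaves →
        cutWeight w L.leaves R.leaves / ((L.leaves.card : ℝ) * (R.leaves.card : ℝ)) ≤
          cutWeight w S ((L.leaves ∪ R.leaves) \ S) /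
            ((S.card : ℝ) * (((L.leaves ∪ R.leaves) \ S).card : ℝ))) ∧
      IsRecSparsestCutTree w L ∧ IsRecSparsestCutTree w R

/-- Cluster trees obtained by recursively splitting along exact densest cuts. -/
def IsRecDensestCutTree [DecidableEq V] (w : V → V → ℝ) : ClusterTree V → Prop
  | ClusterTree.leaf _ => True
  | ClusterTree.node L R =>
      (∀ S : Finset V, S ⊆ L.leaves ∪ R.leaves → S.Nonempty → S ⊂ L.leaves ∪ R.leaves →
        cutWeight w S ((L.leaves ∪ R.leaves) \ S) /
            ((S.card : ℝ) * (((L.leaves ∪ R.leaves) \ S).card : ℝ)) ≤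
          cutWeight w L.leaves R.leaves / ((L.leaves.card : ℝ) * (R.leaves.card : ℝ))) ∧
      IsRecDensestCutTree w L ∧ IsRecDensestCutTree w R

/-- Cluster trees produced by the bisection 2-Center algorithm (similarity setting). -/
def IsBisection2CenterTree [DecidableEq V] (w : V → V → ℝ) : ClusterTree V → Prop
  | ClusterTree.leaf _ => True
  | ClusterTree.node L R =>
      (∃ u ∈ L.leaves ∪ R.leaves, ∃ v ∈ L.leaves ∪ R.leaves, u ≠ v ∧
        (∃ r : ℝ,
          (∀ x ∈ L.leaves ∪ R.leaves, r ≤ max (w x u) (w x v)) ∧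
          (∀ u' ∈ L.leaves ∪ R.leaves, ∀ v' ∈ L.leaves ∪ R.leaves, u' ≠ v' →
            ∃ x ∈ L.leaves ∪ R.leaves, max (w x u') (w x v') ≤ r)) ∧
        L.leaves = (L.leaves ∪ R.leaves).filter fun x => w x v ≤ w x u) ∧
      IsBisection2CenterTree w L ∧ IsBisection2CenterTree w R

/-- Cluster trees produced by the bisection 2-Center algorithm (dissimilarity setting). -/
def IsBisection2CenterTreeDissim [DecidableEq V] (w : V → V → ℝ) : ClusterTree V → Prop
  | ClusterTree.leaf _ => True
  | ClusterTree.node L R =>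
      (∃ u ∈ L.leaves ∪ R.leaves, ∃ v ∈ L.leaves ∪ R.leaves, u ≠ v ∧
        (∃ r : ℝ,
          (∀ x ∈ L.leaves ∪ R.leaves, min (w x u) (w x v) ≤ r) ∧
          (∀ u' ∈ L.leaves ∪ R.leaves, ∀ v' ∈ L.leaves ∪ R.leaves, u' ≠ v' →
            ∃ x ∈ L.leaves ∪ R.leaves, r ≤ min (w x u') (w x v'))) ∧
        L.leaves = (L.leaves ∪ R.leaves).filter fun x => w x u ≤ w x v) ∧
      IsBisection2CenterTreeDissim w L ∧ IsBisection2CenterTreeDissim w R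

end Cuts

/-! ### Pivot algorithms -/

mutual
/-- Trees produced by the fast pivot algorithm (Algorithm 6 of CKMM):
pick a pivot `p`, split the other vertices into classes of equal similarity to `p`
(in strictly decreasing order of similarity), recurse, and attach along a spine. -/
inductive IsPivotTree {V : Type} [DecidableEq V] (w : V → V → ℝ) : ClusterTree V → Prop where
  | mk : ∀ (p : V) (T : ClusterTree V), PivotSpine w p T → IsPivotTree w T

/-- The spine of the pivot algorithm: `PivotSpine w p T` says that `T` is an iterated
union of the single-vertex tree on `p` with pivot trees of the similarity classes of
`p`, attached in strictly decreasing order of similarity to `p`. -/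
inductive PivotSpine {V : Type} [DecidableEq V] (w : V → V → ℝ) : V → ClusterTree V → Prop where
  | base : ∀ p : V, PivotSpine w p (ClusterTree.leaf p)
  | step : ∀ (p : V) (S T : ClusterTree V) (c : ℝ),
      PivotSpine w p S → IsPivotTree w T →
      (∀ v ∈ T.leaves, w p v = c) →
      (∀ u ∈ S.leaves, u ≠ p → c < w p u) →
      PivotSpine w p (ClusterTree.node S T)
end

mutual
/-- Trees produced by the robust pivot algorithm (Algorithm 7 of CKMM). -/
inductive IsRobustPivotTree {V : Type} [DecidableEq V] (w : V → V → ℝ) :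
    ClusterTree V → Prop where
  | mk : ∀ (p : V) (T : ClusterTree V), RobustPivotSpine w T.leaves p T →
      IsRobustPivotTree w T

/-- `RobustPivotSpine w U p T` : `T` is a prefix (a spine) of a run of the robust pivot
algorithm on the vertex set `U`, started at the pivot `p`.  At each step, `wi` is the
maximum weight of an edge in the cut `(Ṽ, U \ Ṽ)` (where `Ṽ` is the set of already
clustered vertices), and the next block is the least subset of `U \ Ṽ` closed under
adding any vertex having an edge of weight at least `wi` into the block or into `Ṽ`. -/
inductive RobustPivotSpine {V : Type} [DecidableEq V] (w : V → V → ℝ) :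
    Finset V → V → ClusterTree V → Prop where
  | base : ∀ (U : Finset V) (p : V), RobustPivotSpine w U p (ClusterTree.leaf p)
  | step : ∀ (U : Finset V) (p : V) (S T : ClusterTree V) (wi : ℝ),
      RobustPivotSpine w U p S →
      IsRobustPivotTree w T →
      (∃ p1 ∈ S.leaves, ∃ p2 ∈ U \ S.leaves, w p1 p2 = wi) →
      (∀ q1 ∈ S.leaves, ∀ q2 ∈ U \ S.leaves, w q1 q2 ≤ wi) →
      T.leaves ⊆ U \ S.leaves →
      (∀ u ∈ U \ S.leaves, (∃ v ∈ T.leaves ∪ S.leaves, wi ≤ w u v) → u ∈ T.leaves) →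
      (∀ C : Finset V, C ⊆ U \ S.leaves →
        (∀ u ∈ U \ S.leaves, (∃ v ∈ C ∪ S.leaves, wi ≤ w u v) → u ∈ C) →
        T.leaves ⊆ C) →
      RobustPivotSpine w U p (ClusterTree.node S T)
end

/-! ### Paths and caterpillars -/

/-- Attach the leaves from the list `l` one by one on top of `t` (a "spine"). -/
def spineTree {V : Type} : ClusterTree V → List V → ClusterTree V
  | t, [] => t
  | t, v :: vs => spineTree (ClusterTree.node t (ClusterTree.leaf v)) vs

/-- The unit-weight path on `n` vertices. -/
def pathW (n : ℕ) (i j : Fin n) : ℝ :=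
  if (i : ℕ) + 1 = (j : ℕ) ∨ (j : ℕ) + 1 = (i : ℕ) then 1 else 0

/-! ### Random graphs: hierarchical stochastic block model -/

/-- Index set for the potential edges of a graph on `Fin n`. -/
abbrev EdgeIdx (n : ℕ) := {p : Fin n × Fin n // p.1 < p.2}

/-- The (0/1) weight function of the random graph described by the edge
configuration `c`. -/
def configW {n : ℕ} (c : EdgeIdx n → Bool) (u v : Fin n) : ℝ :=
  if h : u < v then (if c ⟨(u, v), h⟩ then 1 else 0)
  else if h' : v < u then (if c ⟨(v, u), h'⟩ then 1 else 0)
  else 0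

/-- The probability of the edge configuration `c` when each edge `e` is present
independently with probability `q e`. -/
def configProb {n : ℕ} (q : Fin n → Fin n → ℝ) (c : EdgeIdx n → Bool) : ℝ :=
  ∏ e : EdgeIdx n, if c e then q e.val.1 e.val.2 else 1 - q e.val.1 e.val.2

/-- The expected cost `E[Γ(T) | ψ]` of a fixed cluster tree `T`, over the random
choice of the edges (with edge probabilities `q`). -/
def expectedCost {n : ℕ} (g : ℕ → ℕ → ℝ) (q : Fin n → Fin n → ℝ)
    (T : ClusterTree (Fin n)) : ℝ :=
  ∑ c : EdgeIdx n → Bool, configProb q c * treeCost (configW c) g T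

/-- The (fixed, size-independent) data of a hierarchical stochastic block model with
`k` bottom-level clusters: a generating tree `Ttil` with weights `Wtil` in `(0,1)`
(the graph `G̃ₖ` on `k` vertices generated from an ultrametric), and intra-cluster
probabilities `p i ∈ (0,1]` exceeding the weight of the parent of leaf `i`. -/
structure HSBM (k : ℕ) where
  Ttil : ClusterTree (Fin k)
  Wtil : ClusterTree (Fin k) → ℝ
  p : Fin k → ℝ
  ttil_isClusterTree : IsClusterTree Ttil
  wtil_pos : ∀ L R, IsSubtreeOf (ClusterTree.node L R) Ttil →
    0 < Wtil (ClusterTree.node L R)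
  wtil_lt_one : ∀ L R, IsSubtreeOf (ClusterTree.node L R) Ttil →
    Wtil (ClusterTree.node L R) < 1
  wtil_mono : ∀ L R, IsSubtreeOf (ClusterTree.node L R) Ttil →
    ∀ s, IsSubtreeOf s L ∨ IsSubtreeOf s R → Wtil (ClusterTree.node L R) ≤ Wtil s
  p_pos : ∀ i, 0 < p i
  p_le_one : ∀ i, p i ≤ 1
  p_gt_parent : ∀ L R, IsSubtreeOf (ClusterTree.node L R) Ttil →
    ∀ i : Fin k, L = ClusterTree.leaf i ∨ R = ClusterTree.leaf i →
      Wtil (ClusterTree.node L R) < p i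

/-- The edge probabilities of the HSBM `M` with sparsity `α`, given the assignment
`ψ` of vertices to bottom-level clusters.  These are also the edge weights of the
expected graph `Ḡ`. -/
def HSBM.edgeProb {k : ℕ} (M : HSBM k) (α : ℝ) {n : ℕ} (ψ : Fin n → Fin k) :
    Fin n → Fin n → ℝ := fun u v =>
  if ψ u = ψ v then α * M.p (ψ u)
  else α * M.Wtil (lcaSubtree M.Ttil (ψ u) (ψ v))

/-- The probability of the sample `ω = (ψ, c)` (labels and edges) of the HSBM `M`
with label proportions `f` and sparsity `α`. -/
def hsbmProb {k : ℕ} (M : HSBM k) (f : Fin k → ℝ) (α : ℝ) {n : ℕ}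
    (ω : (Fin n → Fin k) × (EdgeIdx n → Bool)) : ℝ :=
  (∏ v : Fin n, f (ω.1 v)) * configProb (M.edgeProb α ω.1) ω.2

/-- The common cost `κ(n)` of all cluster trees of the unit-weight clique on `n`
vertices (computed on the caterpillar tree). -/
def cliqueTreeCost (g : ℕ → ℕ → ℝ) (n : ℕ) : ℝ :=
  ∑ i ∈ Finset.range n, (i : ℝ) * g i 1

/-- The smoothness property: `max {g(n₁,n₂) : n₁+n₂ = n} = O(κ(n)/n²)`. -/
def SmoothCost (g : ℕ → ℕ → ℝ) : Prop :=
  ∃ C : ℝ, 0 < C ∧ ∀ n1 n2 : ℕ, 1 ≤ n1 → 1 ≤ n2 →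
    g n1 n2 * (((n1 + n2 : ℕ) : ℝ)) ^ 2 ≤ C * cliqueTreeCost g (n1 + n2)

end

/-! ### Auxiliary development for statement0 -/

namespace CKMMAux

open ClusterTree

set_option linter.unusedSectionVars false

variable {V : Type} [DecidableEq V]

/-! #### Basic tree lemmas -/

theorem leavesList_ne_nil (T : ClusterTree V) : T.leavesList ≠ [] := by
  induction T with
  | leaf v => simp [ClusterTree.leavesList]
  | node L R ihL ihR => simp [ClusterTree.leavesList, ihL]

theorem mem_leaves {T : ClusterTree V} {x : V} : x ∈ T.leaves ↔ x ∈ T.leavesList := by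
  simp [ClusterTree.leaves]

theorem leaves_nonempty (T : ClusterTree V) : T.leaves.Nonempty := by
  obtain ⟨x, hx⟩ := List.exists_mem_of_ne_nil _ (leavesList_ne_nil T)
  exact ⟨x, mem_leaves.2 hx⟩

theorem leaves_node (L R : ClusterTree V) :
    (ClusterTree.node L R).leaves = L.leaves ∪ R.leaves := by
  simp [ClusterTree.leaves, ClusterTree.leavesList]

theorem leaves_leaf (v : V) : (ClusterTree.leaf v).leaves = {v} := by
  simp [ClusterTree.leaves, ClusterTree.leavesList]

theorem nodup_node {L R : ClusterTree V}
    (h : (ClusterTree.node L R).leavesList.Nodup) :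
    L.leavesList.Nodup ∧ R.leavesList.Nodup ∧ Disjoint L.leaves R.leaves := by
  rw [ClusterTree.leavesList, List.nodup_append] at h
  refine ⟨h.1, h.2.1, ?_⟩
  rw [Finset.disjoint_left]
  intro a haL haR
  exact h.2.2 _ (mem_leaves.1 haL) _ (mem_leaves.1 haR) rfl

theorem card_leaves {T : ClusterTree V} (h : T.leavesList.Nodup) :
    T.leaves.card = T.leavesList.length :=
  List.toFinset_card_of_nodup h

theorem card_leaves_pos (T : ClusterTree V) : 0 < T.leaves.card :=
  Finset.card_pos.2 (leaves_nonempty T)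

theorem card_leaves_node {L R : ClusterTree V}
    (h : (ClusterTree.node L R).leavesList.Nodup) :
    (ClusterTree.node L R).leaves.card = L.leaves.card + R.leaves.card := by
  obtain ⟨h1, h2, h3⟩ := nodup_node h
  rw [leaves_node, Finset.card_union_of_disjoint h3]

/-! #### Subtree lemmas -/

theorem isSubtreeOf_self (T : ClusterTree V) : IsSubtreeOf T T := by
  cases T with
  | leaf v => rfl
  | node L R => exact Or.inl rfl

theorem isSubtreeOf_node_left (L R : ClusterTree V) :
    IsSubtreeOf L (ClusterTree.node L R) := Or.inr (Or.inl (isSubtreeOf_self L))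

theorem isSubtreeOf_node_right (L R : ClusterTree V) :
    IsSubtreeOf R (ClusterTree.node L R) := Or.inr (Or.inr (isSubtreeOf_self R))

theorem isSubtreeOf_trans {a b c : ClusterTree V}
    (hab : IsSubtreeOf a b) (hbc : IsSubtreeOf b c) : IsSubtreeOf a c := by
  induction c with
  | leaf v => rw [IsSubtreeOf] at hbc ⊢; subst hbc; exact hab
  | node L R ihL ihR =>
    rw [IsSubtreeOf] at hbc ⊢
    rcases hbc with h | h | h
    · subst h; exact hab
    · exact Or.inr (Or.inl (ihL h))
    · exact Or.inr (Or.inr (ihR h))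

theorem leaves_subset_of_isSubtreeOf {s T : ClusterTree V} (h : IsSubtreeOf s T) :
    s.leaves ⊆ T.leaves := by
  induction T with
  | leaf v => rw [IsSubtreeOf] at h; subst h; exact subset_rfl
  | node L R ihL ihR =>
    rw [IsSubtreeOf] at h
    rcases h with h | h | h
    · subst h; exact subset_rfl
    · rw [leaves_node]; exact (ihL h).trans Finset.subset_union_left
    · rw [leaves_node]; exact (ihR h).trans Finset.subset_union_right

theorem nodup_of_isSubtreeOf {s T : ClusterTree V} (h : IsSubtreeOf s T)
    (hT : T.leavesList.Nodup) : s.leavesList.Nodup := by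
  induction T with
  | leaf v => rw [IsSubtreeOf] at h; subst h; exact hT
  | node L R ihL ihR =>
    obtain ⟨h1, h2, _⟩ := nodup_node hT
    rw [IsSubtreeOf] at h
    rcases h with h | h | h
    · subst h; exact hT
    · exact ihL h h1
    · exact ihR h h2

theorem leaf_isSubtreeOf {T : ClusterTree V} {x : V} (hx : x ∈ T.leaves) :
    IsSubtreeOf (ClusterTree.leaf x) T := by
  induction T with
  | leaf v =>
    rw [leaves_leaf, Finset.mem_singleton] at hx; subst hx; exact isSubtreeOf_self _
  | node L R ihL ihR =>
    rw [leaves_node, Finset.mem_union] at hx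
    rcases hx with hx | hx
    · exact Or.inr (Or.inl (ihL hx))
    · exact Or.inr (Or.inr (ihR hx))

theorem length_le_of_isSubtreeOf {s T : ClusterTree V} (h : IsSubtreeOf s T) :
    s.leavesList.length ≤ T.leavesList.length := by
  induction T with
  | leaf v => rw [IsSubtreeOf] at h; subst h; exact le_rfl
  | node L R ihL ihR =>
    rw [IsSubtreeOf] at h
    have hL1 : 1 ≤ L.leavesList.length := List.length_pos_iff.2 (leavesList_ne_nil L)
    have hR1 : 1 ≤ R.leavesList.length := List.length_pos_iff.2 (leavesList_ne_nil R)
    rcases h with h | h | h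
    · subst h; exact le_rfl
    · calc s.leavesList.length ≤ L.leavesList.length := ihL h
        _ ≤ _ := by simp only [ClusterTree.leavesList, List.length_append]; omega
    · calc s.leavesList.length ≤ R.leavesList.length := ihR h
        _ ≤ _ := by simp only [ClusterTree.leavesList, List.length_append]; omega

theorem eq_of_isSubtreeOf_leaves_eq {s T : ClusterTree V} (h : IsSubtreeOf s T)
    (hT : T.leavesList.Nodup) (hs : s.leaves = T.leaves) : s = T := by
  induction T with
  | leaf v => rw [IsSubtreeOf] at h; exact h
  | node L R ihL ihR =>
    have hsub : IsSubtreeOf s (ClusterTree.node L R) := h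
    rcases h with h | h | h
    · exact h
    all_goals {
      exfalso
      have h1 := length_le_of_isSubtreeOf h
      have h2 : s.leaves.card = (ClusterTree.node L R).leaves.card := by rw [hs]
      rw [card_leaves (nodup_of_isSubtreeOf hsub hT), card_leaves hT] at h2
      have hR1 : 1 ≤ R.leavesList.length := List.length_pos_iff.2 (leavesList_ne_nil R)
      have hL1 : 1 ≤ L.leavesList.length := List.length_pos_iff.2 (leavesList_ne_nil L)
      simp only [ClusterTree.leavesList, List.length_append] at h2
      omega }

/-! #### lcaSubtree lemmas -/

theorem lcaSubtree_isSubtreeOf (T : ClusterTree V) (x y : V) :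
    IsSubtreeOf (lcaSubtree T x y) T := by
  induction T with
  | leaf v => exact rfl
  | node L R ihL ihR =>
    rw [lcaSubtree]
    split
    · exact Or.inr (Or.inl ihL)
    · split
      · exact Or.inr (Or.inr ihR)
      · exact Or.inl rfl

theorem lcaSubtree_node_cross_left {L R : ClusterTree V} {x y : V}
    (hnd : (ClusterTree.node L R).leavesList.Nodup)
    (hx : x ∈ L.leaves) (hy : y ∈ R.leaves) :
    lcaSubtree (ClusterTree.node L R) x y = ClusterTree.node L R := by
  obtain ⟨_, _, hdisj⟩ := nodup_node hnd
  rw [lcaSubtree, if_neg (fun h => (Finset.disjoint_left.1 hdisj h.2) hy),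
    if_neg (fun h => (Finset.disjoint_left.1 hdisj hx) h.1)]

theorem lcaSubtree_node_cross_right {L R : ClusterTree V} {x y : V}
    (hnd : (ClusterTree.node L R).leavesList.Nodup)
    (hx : x ∈ R.leaves) (hy : y ∈ L.leaves) :
    lcaSubtree (ClusterTree.node L R) x y = ClusterTree.node L R := by
  obtain ⟨_, _, hdisj⟩ := nodup_node hnd
  rw [lcaSubtree, if_neg (fun h => (Finset.disjoint_left.1 hdisj h.1) hx),
    if_neg (fun h => (Finset.disjoint_left.1 hdisj hy) h.2)]

theorem lcaSubtree_node_left {L R : ClusterTree V} {x y : V}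
    (hx : x ∈ L.leaves) (hy : y ∈ L.leaves) :
    lcaSubtree (ClusterTree.node L R) x y = lcaSubtree L x y := by
  rw [lcaSubtree, if_pos ⟨hx, hy⟩]

theorem lcaSubtree_node_right {L R : ClusterTree V} {x y : V}
    (hnd : (ClusterTree.node L R).leavesList.Nodup)
    (hx : x ∈ R.leaves) (hy : y ∈ R.leaves) :
    lcaSubtree (ClusterTree.node L R) x y = lcaSubtree R x y := by
  obtain ⟨_, _, hdisj⟩ := nodup_node hnd
  rw [lcaSubtree, if_neg (fun h => (Finset.disjoint_left.1 hdisj h.1) hx), if_pos ⟨hx, hy⟩]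

/-! #### cutWeight lemmas -/

theorem cutWeight_nonneg {w : V → V → ℝ} (hw : ∀ x y, 0 ≤ w x y) (A B : Finset V) :
    0 ≤ cutWeight w A B :=
  Finset.sum_nonneg fun a _ => Finset.sum_nonneg fun b _ => hw a b

theorem cutWeight_congr {w w' : V → V → ℝ} {A B : Finset V}
    (h : ∀ x ∈ A, ∀ y ∈ B, w x y = w' x y) : cutWeight w A B = cutWeight w' A B :=
  Finset.sum_congr rfl fun a ha => Finset.sum_congr rfl fun b hb => h a ha b hb

theorem cutWeight_const {w : V → V → ℝ} {A B : Finset V} {c : ℝ}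
    (h : ∀ x ∈ A, ∀ y ∈ B, w x y = c) :
    cutWeight w A B = (A.card : ℝ) * (B.card : ℝ) * c := by
  rw [cutWeight]
  rw [Finset.sum_congr rfl fun a ha => Finset.sum_congr rfl fun b hb => h a ha b hb]
  simp [Finset.sum_const, nsmul_eq_mul]
  ring

theorem cutWeight_add (w w' : V → V → ℝ) (A B : Finset V) :
    cutWeight (fun x y => w x y + w' x y) A B = cutWeight w A B + cutWeight w' A B := by
  simp [cutWeight, Finset.sum_add_distrib]

theorem cutWeight_smul (c : ℝ) (w : V → V → ℝ) (A B : Finset V) :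
    cutWeight (fun x y => c * w x y) A B = c * cutWeight w A B := by
  simp [cutWeight, Finset.mul_sum]

theorem cutWeight_sum {ι : Type*} (s : Finset ι) (u : ι → V → V → ℝ) (A B : Finset V) :
    cutWeight (fun x y => ∑ i ∈ s, u i x y) A B = ∑ i ∈ s, cutWeight (u i) A B := by
  rw [cutWeight]
  rw [Finset.sum_congr rfl fun a (_ : a ∈ A) =>
    (Finset.sum_comm (s := B) (t := s) (f := fun b i => u i a b))]
  rw [Finset.sum_comm]
  rfl

theorem cutWeight_subset {w : V → V → ℝ} {A B A' B' : Finset V}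
    (hA : A' ⊆ A) (hB : B' ⊆ B)
    (hsupp : ∀ x y, w x y ≠ 0 → x ∈ A' ∧ y ∈ B') :
    cutWeight w A B = cutWeight w A' B' := by
  rw [cutWeight, cutWeight]
  rw [← Finset.sum_subset hA (fun x hx hx' => ?_)]
  · refine Finset.sum_congr rfl fun a _ => ?_
    refine (Finset.sum_subset hB fun y hy hy' => ?_).symm
    by_contra h
    exact hy' (hsupp a y h).2
  · refine Finset.sum_eq_zero fun y _ => ?_
    by_contra h
    exact hx' (hsupp x y h).1

/-! #### treeCost lemmas -/

theorem treeCost_nonneg {w : V → V → ℝ} {g : ℕ → ℕ → ℝ}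
    (hw : ∀ x y, 0 ≤ w x y) (hg : ∀ a b, 0 ≤ g a b) (T : ClusterTree V) :
    0 ≤ treeCost w g T := by
  induction T with
  | leaf v => simp [treeCost]
  | node L R ihL ihR =>
    rw [treeCost]
    have h1 := mul_nonneg (cutWeight_nonneg hw L.leaves R.leaves)
      (hg L.leaves.card R.leaves.card)
    linarith

theorem treeCost_congr {w w' : V → V → ℝ} {g : ℕ → ℕ → ℝ} {T : ClusterTree V}
    (h : ∀ x ∈ T.leaves, ∀ y ∈ T.leaves, w x y = w' x y) :
    treeCost w g T = treeCost w' g T := by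
  induction T with
  | leaf v => simp [treeCost]
  | node L R ihL ihR =>
    have hL : L.leaves ⊆ (ClusterTree.node L R).leaves := by
      rw [leaves_node]; exact Finset.subset_union_left
    have hR : R.leaves ⊆ (ClusterTree.node L R).leaves := by
      rw [leaves_node]; exact Finset.subset_union_right
    rw [treeCost, treeCost,
      ihL (fun x hx y hy => h x (hL hx) y (hL hy)),
      ihR (fun x hx y hy => h x (hR hx) y (hR hy)),
      cutWeight_congr (fun x hx y hy => h x (hL hx) y (hR hy))]

theorem treeCost_add (w w' : V → V → ℝ) (g : ℕ → ℕ → ℝ) (T : ClusterTree V) :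
    treeCost (fun x y => w x y + w' x y) g T = treeCost w g T + treeCost w' g T := by
  induction T with
  | leaf v => simp [treeCost]
  | node L R ihL ihR => rw [treeCost, treeCost, treeCost, ihL, ihR, cutWeight_add]; ring

theorem treeCost_smul (c : ℝ) (w : V → V → ℝ) (g : ℕ → ℕ → ℝ) (T : ClusterTree V) :
    treeCost (fun x y => c * w x y) g T = c * treeCost w g T := by
  induction T with
  | leaf v => simp [treeCost]
  | node L R ihL ihR => rw [treeCost, treeCost, ihL, ihR, cutWeight_smul]; ring

theorem treeCost_finsum {ι : Type*} (s : Finset ι) (u : ι → V → V → ℝ)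
    (g : ℕ → ℕ → ℝ) (T : ClusterTree V) :
    treeCost (fun x y => ∑ i ∈ s, u i x y) g T = ∑ i ∈ s, treeCost (u i) g T := by
  induction T with
  | leaf v => simp [treeCost]
  | node L R ihL ihR =>
    rw [treeCost, ihL, ihR, cutWeight_sum, Finset.sum_mul]
    rw [show (∑ i ∈ s, treeCost (u i) g (ClusterTree.node L R)) =
      ∑ i ∈ s, (cutWeight (u i) L.leaves R.leaves * g L.leaves.card R.leaves.card
        + treeCost (u i) g L + treeCost (u i) g R) from
      Finset.sum_congr rfl fun i _ => rfl]
    rw [Finset.sum_add_distrib, Finset.sum_add_distrib]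

/-! #### The `good` predicate -/

/-- Combinatorial characterization of generating trees. -/
def good (w : V → V → ℝ) : ClusterTree V → Prop
  | ClusterTree.leaf _ => True
  | ClusterTree.node L R =>
      (∀ x ∈ L.leaves, ∀ y ∈ R.leaves, ∀ x' ∈ L.leaves, ∀ y' ∈ R.leaves,
        w x y = w x' y') ∧
      (∀ x ∈ L.leaves, ∀ y ∈ R.leaves, ∀ u ∈ L.leaves, ∀ v ∈ L.leaves, u ≠ v →
        w x y ≤ w u v) ∧
      (∀ x ∈ L.leaves, ∀ y ∈ R.leaves, ∀ u ∈ R.leaves, ∀ v ∈ R.leaves, u ≠ v →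
        w x y ≤ w u v) ∧
      good w L ∧ good w R

theorem good_leaf (w : V → V → ℝ) (v : V) : good w (ClusterTree.leaf v) := trivial

theorem good_of_isSubtreeOf {w : V → V → ℝ} {s T : ClusterTree V}
    (h : IsSubtreeOf s T) (hT : good w T) : good w s := by
  induction T with
  | leaf v => rw [IsSubtreeOf] at h; subst h; exact hT
  | node L R ihL ihR =>
    rcases h with h | h | h
    · exact h ▸ hT
    · exact ihL h hT.2.2.2.1
    · exact ihR h hT.2.2.2.2

theorem good_of_const {w : V → V → ℝ} {c : ℝ} :
    ∀ (T : ClusterTree V), T.leavesList.Nodup →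
    (∀ x ∈ T.leaves, ∀ y ∈ T.leaves, x ≠ y → w x y = c) → good w T := by
  intro T
  induction T with
  | leaf v => intro _ _; trivial
  | node L R ihL ihR =>
    intro hnd h
    obtain ⟨hndL, hndR, hdisj⟩ := nodup_node hnd
    have hL : L.leaves ⊆ (ClusterTree.node L R).leaves := by
      rw [leaves_node]; exact Finset.subset_union_left
    have hR : R.leaves ⊆ (ClusterTree.node L R).leaves := by
      rw [leaves_node]; exact Finset.subset_union_right
    have hc : ∀ x ∈ L.leaves, ∀ y ∈ R.leaves, w x y = c := fun x hx y hy =>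
      h x (hL hx) y (hR hy) (fun he => (Finset.disjoint_left.1 hdisj hx) (he ▸ hy))
    refine ⟨fun x hx y hy x' hx' y' hy' => ?_, fun x hx y hy u hu v hv huv => ?_,
      fun x hx y hy u hu v hv huv => ?_,
      ihL hndL (fun x hx y hy hxy => h x (hL hx) y (hL hy) hxy),
      ihR hndR (fun x hx y hy hxy => h x (hR hx) y (hR hy) hxy)⟩
    · rw [hc x hx y hy, hc x' hx' y' hy']
    · rw [hc x hx y hy, h u (hL hu) v (hL hv) huv]
    · rw [hc x hx y hy, h u (hR hu) v (hR hv) huv]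

/-- Weight function witnessing `IsGenerating` for a `good` tree. -/
noncomputable def Wgen (w : V → V → ℝ) (M : ℝ) : ClusterTree V → ℝ
  | ClusterTree.leaf _ => M
  | ClusterTree.node A B =>
      cutWeight w A.leaves B.leaves / ((A.leaves.card : ℝ) * (B.leaves.card : ℝ))

theorem Wgen_node {w : V → V → ℝ} {M : ℝ} {A B : ClusterTree V} {x y : V}
    (hgood : good w (ClusterTree.node A B)) (hx : x ∈ A.leaves) (hy : y ∈ B.leaves) :
    Wgen w M (ClusterTree.node A B) = w x y := by
  have hconst : ∀ x' ∈ A.leaves, ∀ y' ∈ B.leaves, w x' y' = w x y :=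
    fun x' hx' y' hy' => hgood.1 x' hx' y' hy' x hx y hy
  have hA : (0 : ℝ) < (A.leaves.card : ℝ) := by exact_mod_cast card_leaves_pos A
  have hB : (0 : ℝ) < (B.leaves.card : ℝ) := by exact_mod_cast card_leaves_pos B
  rw [Wgen, cutWeight_const hconst]
  field_simp

theorem isGenerating_of_good {w : V → V → ℝ} {T : ClusterTree V}
    (hsym : ∀ x y, w x y = w y x) (hnn : ∀ x y, 0 ≤ w x y)
    (hnd : T.leavesList.Nodup) (hgood : good w T) : IsGenerating w T := by
  classical
  set M : ℝ := cutWeight (fun x y => |w x y|) T.leaves T.leaves + 1 with hM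
  have hM0 : 0 ≤ M := by
    have := cutWeight_nonneg (w := fun x y => |w x y|) (fun x y => abs_nonneg _)
      T.leaves T.leaves
    linarith
  have hle_M : ∀ x ∈ T.leaves, ∀ y ∈ T.leaves, w x y ≤ M := by
    intro x hx y hy
    have h1 : |w x y| ≤ cutWeight (fun x y => |w x y|) T.leaves T.leaves := by
      rw [cutWeight]
      calc |w x y| ≤ ∑ b ∈ T.leaves, |w x b| :=
            Finset.single_le_sum (f := fun b => |w x b|) (fun b _ => abs_nonneg _) hy
        _ ≤ _ := Finset.single_le_sum (f := fun a => ∑ b ∈ T.leaves, |w a b|)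
            (fun a _ => Finset.sum_nonneg fun b _ => abs_nonneg _) hx
    have := le_abs_self (w x y)
    linarith
  refine ⟨Wgen w M, ?_, ?_, ?_⟩
  · intro s hs
    cases s with
    | leaf v => simpa [Wgen] using hM0
    | node A B =>
      have hg' : good w (ClusterTree.node A B) := good_of_isSubtreeOf hs hgood
      obtain ⟨x, hx⟩ := leaves_nonempty A
      obtain ⟨y, hy⟩ := leaves_nonempty B
      rw [Wgen_node hg' hx hy]
      exact hnn x y
  · intro A B hAB s hs
    have hgAB : good w (ClusterTree.node A B) := good_of_isSubtreeOf hAB hgood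
    obtain ⟨x0, hx0⟩ := leaves_nonempty A
    obtain ⟨y0, hy0⟩ := leaves_nonempty B
    rw [Wgen_node hgAB hx0 hy0]
    have hsubT : IsSubtreeOf s T := by
      rcases hs with hs | hs
      · exact isSubtreeOf_trans (isSubtreeOf_trans hs (isSubtreeOf_node_left A B)) hAB
      · exact isSubtreeOf_trans (isSubtreeOf_trans hs (isSubtreeOf_node_right A B)) hAB
    have hABsubT := leaves_subset_of_isSubtreeOf hAB
    have hAsub : A.leaves ⊆ T.leaves := by
      refine subset_trans ?_ hABsubT; rw [leaves_node]; exact Finset.subset_union_left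
    have hBsub : B.leaves ⊆ T.leaves := by
      refine subset_trans ?_ hABsubT; rw [leaves_node]; exact Finset.subset_union_right
    cases s with
    | leaf v => rw [Wgen]; exact hle_M x0 (hAsub hx0) y0 (hBsub hy0)
    | node A' B' =>
      have hgs : good w (ClusterTree.node A' B') := good_of_isSubtreeOf hsubT hgood
      obtain ⟨x', hx'⟩ := leaves_nonempty A'
      obtain ⟨y', hy'⟩ := leaves_nonempty B'
      rw [Wgen_node hgs hx' hy']
      have hnds : (ClusterTree.node A' B').leavesList.Nodup :=
        nodup_of_isSubtreeOf hsubT hnd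
      have hxy' : x' ≠ y' := by
        obtain ⟨_, _, hdisj⟩ := nodup_node hnds
        intro h; exact (Finset.disjoint_left.1 hdisj hx') (h ▸ hy')
      have hx'mem : x' ∈ (ClusterTree.node A' B').leaves := by
        rw [leaves_node]; exact Finset.mem_union_left _ hx'
      have hy'mem : y' ∈ (ClusterTree.node A' B').leaves := by
        rw [leaves_node]; exact Finset.mem_union_right _ hy'
      rcases hs with hs | hs
      · have hsub' := leaves_subset_of_isSubtreeOf hs
        exact hgAB.2.1 x0 hx0 y0 hy0 x' (hsub' hx'mem) y' (hsub' hy'mem) hxy'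
      · have hsub' := leaves_subset_of_isSubtreeOf hs
        exact hgAB.2.2.1 x0 hx0 y0 hy0 x' (hsub' hx'mem) y' (hsub' hy'mem) hxy'
  · -- the LCA condition, by induction over subtrees
    suffices h : ∀ s : ClusterTree V, s.leavesList.Nodup → good w s →
        ∀ x y, x ∈ s.leaves → y ∈ s.leaves → x ≠ y →
          w x y = Wgen w M (lcaSubtree s x y) by
      exact h T hnd hgood
    intro s
    induction s with
    | leaf v =>
      intro _ _ x y hx hy hxy
      rw [leaves_leaf, Finset.mem_singleton] at hx hy
      exact absurd (hx.trans hy.symm) hxy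
    | node L R ihL ihR =>
      intro hnds hgs x y hx hy hxy
      obtain ⟨hndL, hndR, hdisj⟩ := nodup_node hnds
      rw [leaves_node, Finset.mem_union] at hx hy
      rcases hx with hx | hx <;> rcases hy with hy | hy
      · rw [lcaSubtree_node_left hx hy]; exact ihL hndL hgs.2.2.2.1 x y hx hy hxy
      · rw [lcaSubtree_node_cross_left hnds hx hy, Wgen_node hgs hx hy]
      · rw [lcaSubtree_node_cross_right hnds hx hy, Wgen_node hgs hy hx]
        exact hsym x y
      · rw [lcaSubtree_node_right hnds hx hy]; exact ihR hndR hgs.2.2.2.2 x y hx hy hxy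

theorem good_of_isGenerating {w : V → V → ℝ} {T : ClusterTree V}
    (hnd : T.leavesList.Nodup) (h : IsGenerating w T) : good w T := by
  induction T with
  | leaf v => trivial
  | node L R ihL ihR =>
    obtain ⟨W, hWnn, hWmono, hWlca⟩ := h
    obtain ⟨hndL, hndR, hdisj⟩ := nodup_node hnd
    have hLsub : L.leaves ⊆ (ClusterTree.node L R).leaves := by
      rw [leaves_node]; exact Finset.subset_union_left
    have hRsub : R.leaves ⊆ (ClusterTree.node L R).leaves := by
      rw [leaves_node]; exact Finset.subset_union_right
    have hcross : ∀ x ∈ L.leaves, ∀ y ∈ R.leaves,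
        w x y = W (ClusterTree.node L R) := by
      intro x hx y hy
      have hxy : x ≠ y := fun h => (Finset.disjoint_left.1 hdisj hx) (h ▸ hy)
      rw [hWlca x y (hLsub hx) (hRsub hy) hxy, lcaSubtree_node_cross_left hnd hx hy]
    have hself : IsSubtreeOf (ClusterTree.node L R) (ClusterTree.node L R) :=
      isSubtreeOf_self _
    refine ⟨fun x hx y hy x' hx' y' hy' => by
        rw [hcross x hx y hy, hcross x' hx' y' hy'],
      fun x hx y hy u hu v hv huv => ?_, fun x hx y hy u hu v hv huv => ?_, ?_, ?_⟩
    · rw [hcross x hx y hy, hWlca u v (hLsub hu) (hLsub hv) huv,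
        lcaSubtree_node_left hu hv]
      exact hWmono L R hself _ (Or.inl (lcaSubtree_isSubtreeOf L u v))
    · rw [hcross x hx y hy, hWlca u v (hRsub hu) (hRsub hv) huv,
        lcaSubtree_node_right hnd hu hv]
      exact hWmono L R hself _ (Or.inr (lcaSubtree_isSubtreeOf R u v))
    · refine ihL hndL ⟨W, ?_, ?_, ?_⟩
      · intro s hs
        exact hWnn s (isSubtreeOf_trans hs (isSubtreeOf_node_left L R))
      · intro A B hAB s hs
        exact hWmono A B (isSubtreeOf_trans hAB (isSubtreeOf_node_left L R)) s hs
      · intro x y hx hy hxy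
        rw [hWlca x y (hLsub hx) (hLsub hy) hxy, lcaSubtree_node_left hx hy]
    · refine ihR hndR ⟨W, ?_, ?_, ?_⟩
      · intro s hs
        exact hWnn s (isSubtreeOf_trans hs (isSubtreeOf_node_right L R))
      · intro A B hAB s hs
        exact hWmono A B (isSubtreeOf_trans hAB (isSubtreeOf_node_right L R)) s hs
      · intro x y hx hy hxy
        rw [hWlca x y (hRsub hx) (hRsub hy) hxy, lcaSubtree_node_right hnd hx hy]

/-! #### Restriction of a tree to a subset of the leaves -/

/-- Restrict a cluster tree to the leaves lying in `A`. -/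
def restr (A : Finset V) : ClusterTree V → Option (ClusterTree V)
  | ClusterTree.leaf v => if v ∈ A then some (ClusterTree.leaf v) else none
  | ClusterTree.node L R =>
    match restr A L, restr A R with
    | some L', some R' => some (ClusterTree.node L' R')
    | some L', none => some L'
    | none, r => r

theorem restr_spec (A : Finset V) (T : ClusterTree V) :
    ((restr A T).elim [] ClusterTree.leavesList) =
      T.leavesList.filter (fun x => decide (x ∈ A)) := by
  induction T with
  | leaf v =>
    rw [restr]
    by_cases h : v ∈ A <;> simp [h, ClusterTree.leavesList]
  | node L R ihL ihR =>
    cases hL : restr A L with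
    | none =>
      cases hR : restr A R with
      | none =>
        rw [restr, hL, hR]
        rw [hL] at ihL; rw [hR] at ihR
        simp only [Option.elim] at ihL ihR ⊢
        simp [ClusterTree.leavesList, List.filter_append, ← ihL, ← ihR]
      | some R' =>
        rw [restr, hL, hR]
        rw [hL] at ihL; rw [hR] at ihR
        simp only [Option.elim] at ihL ihR ⊢
        simp [ClusterTree.leavesList, List.filter_append, ← ihL, ← ihR]
    | some L' =>
      cases hR : restr A R with
      | none =>
        rw [restr, hL, hR]
        rw [hL] at ihL; rw [hR] at ihR
        simp only [Option.elim] at ihL ihR ⊢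
        simp [ClusterTree.leavesList, List.filter_append, ← ihL, ← ihR]
      | some R' =>
        rw [restr, hL, hR]
        rw [hL] at ihL; rw [hR] at ihR
        simp only [Option.elim] at ihL ihR ⊢
        simp [ClusterTree.leavesList, List.filter_append, ← ihL, ← ihR]

theorem restr_eq_none_iff {A : Finset V} {T : ClusterTree V} :
    restr A T = none ↔ ∀ x ∈ T.leaves, x ∉ A := by
  have hs := restr_spec A T
  constructor
  · intro h x hx hxA
    rw [h] at hs
    simp only [Option.elim] at hs
    have : x ∈ T.leavesList.filter (fun x => decide (x ∈ A)) := by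
      rw [List.mem_filter]
      exact ⟨mem_leaves.1 hx, by simpa using hxA⟩
    rw [← hs] at this
    simp at this
  · intro h
    cases hT : restr A T with
    | none => rfl
    | some T' =>
      exfalso
      rw [hT] at hs
      simp only [Option.elim] at hs
      obtain ⟨x, hx⟩ := List.exists_mem_of_ne_nil _ (leavesList_ne_nil T')
      rw [hs, List.mem_filter] at hx
      exact h x (mem_leaves.2 hx.1) (by simpa using hx.2)

theorem restr_some_spec {A : Finset V} {T T' : ClusterTree V}
    (h : restr A T = some T') :
    T'.leaves = T.leaves ∩ A ∧
      (T.leavesList.Nodup → T'.leavesList.Nodup) := by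
  have hs := restr_spec A T
  rw [h] at hs
  simp only [Option.elim] at hs
  constructor
  · ext x
    rw [mem_leaves, hs, List.mem_filter, Finset.mem_inter, mem_leaves]
    simp
  · intro hnd
    rw [hs]
    exact hnd.filter _

theorem restr_of_subset {A : Finset V} {T : ClusterTree V} (h : T.leaves ⊆ A) :
    restr A T = some T := by
  induction T with
  | leaf v =>
    rw [restr, if_pos (h (by rw [leaves_leaf]; exact Finset.mem_singleton_self v))]
  | node L R ihL ihR =>
    have hL : L.leaves ⊆ A := fun x hx =>
      h (by rw [leaves_node]; exact Finset.mem_union_left _ hx)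
    have hR : R.leaves ⊆ A := fun x hx =>
      h (by rw [leaves_node]; exact Finset.mem_union_right _ hx)
    rw [restr, ihL hL, ihR hR]

theorem restr_isSome {A : Finset V} {T : ClusterTree V} {x : V}
    (hx : x ∈ T.leaves) (hxA : x ∈ A) : ∃ T', restr A T = some T' := by
  cases h : restr A T with
  | none => exact absurd hxA (restr_eq_none_iff.1 h x hx)
  | some T' => exact ⟨T', rfl⟩

/-- Refined version of `cutWeight_subset`. -/
theorem cutWeight_subset' {w : V → V → ℝ} {A B A' B' : Finset V}
    (hA : A' ⊆ A) (hB : B' ⊆ B)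
    (hsupp : ∀ x ∈ A, ∀ y ∈ B, w x y ≠ 0 → x ∈ A' ∧ y ∈ B') :
    cutWeight w A B = cutWeight w A' B' := by
  rw [cutWeight, cutWeight]
  rw [← Finset.sum_subset hA (fun x hx hx' => ?_)]
  · refine Finset.sum_congr rfl fun a ha => ?_
    refine (Finset.sum_subset hB fun y hy hy' => ?_).symm
    by_contra h
    exact hy' (hsupp a (hA ha) y hy h).2
  · refine Finset.sum_eq_zero fun y hy => ?_
    by_contra h
    exact hx' (hsupp x hx y hy h).1

theorem treeCost_eq_zero_of_disjoint {u : V → V → ℝ} {g : ℕ → ℕ → ℝ} {A : Finset V}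
    (husupp : ∀ x y, u x y ≠ 0 → x ∈ A ∧ y ∈ A) {T : ClusterTree V}
    (hdisj : ∀ x ∈ T.leaves, x ∉ A) : treeCost u g T = 0 := by
  induction T with
  | leaf v => rfl
  | node L R ihL ihR =>
    have hL : ∀ x ∈ L.leaves, x ∉ A := fun x hx =>
      hdisj x (by rw [leaves_node]; exact Finset.mem_union_left _ hx)
    have hR : ∀ x ∈ R.leaves, x ∉ A := fun x hx =>
      hdisj x (by rw [leaves_node]; exact Finset.mem_union_right _ hx)
    rw [treeCost, ihL hL, ihR hR]
    have hcut : cutWeight u L.leaves R.leaves = 0 := by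
      refine Finset.sum_eq_zero fun x hx => Finset.sum_eq_zero fun y hy => ?_
      by_contra h
      exact hL x hx (husupp x y h).1
    rw [hcut]; ring

theorem restr_cost_le {u : V → V → ℝ} {g : ℕ → ℕ → ℝ} {A : Finset V}
    (hu0 : ∀ x y, 0 ≤ u x y)
    (husupp : ∀ x y, u x y ≠ 0 → x ∈ A ∧ y ∈ A)
    (hgnn : ∀ a b, 0 ≤ g a b)
    (gmono : ∀ a b a' b' : ℕ, 1 ≤ a → 1 ≤ b → a ≤ a' → b ≤ b' → g a b ≤ g a' b') :
    ∀ T : ClusterTree V, (restr A T).elim 0 (treeCost u g) ≤ treeCost u g T := by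
  intro T
  induction T with
  | leaf v =>
    rw [restr]
    by_cases h : v ∈ A <;> simp [h, treeCost]
  | node L R ihL ihR =>
    have hcut0 : 0 ≤ cutWeight u L.leaves R.leaves * g L.leaves.card R.leaves.card :=
      mul_nonneg (cutWeight_nonneg hu0 _ _) (hgnn _ _)
    have hcL : 0 ≤ treeCost u g L := treeCost_nonneg hu0 hgnn L
    have hcR : 0 ≤ treeCost u g R := treeCost_nonneg hu0 hgnn R
    cases hL : restr A L with
    | none =>
      cases hR : restr A R with
      | none =>
        rw [restr, hL, hR]
        simp only [Option.elim]
        rw [treeCost]; linarith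
      | some R' =>
        rw [restr, hL, hR]
        simp only [Option.elim]
        rw [hR] at ihR
        simp only [Option.elim] at ihR
        rw [treeCost]; linarith
    | some L' =>
      cases hR : restr A R with
      | none =>
        rw [restr, hL, hR]
        simp only [Option.elim]
        rw [hL] at ihL
        simp only [Option.elim] at ihL
        rw [treeCost]; linarith
      | some R' =>
        rw [restr, hL, hR]
        simp only [Option.elim]
        rw [hL] at ihL; rw [hR] at ihR
        simp only [Option.elim] at ihL ihR
        obtain ⟨hL'leaves, _⟩ := restr_some_spec hL
        obtain ⟨hR'leaves, _⟩ := restr_some_spec hR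
        have hcuteq : cutWeight u L.leaves R.leaves
            = cutWeight u L'.leaves R'.leaves := by
          refine cutWeight_subset' ?_ ?_ ?_
          · rw [hL'leaves]; exact Finset.inter_subset_left
          · rw [hR'leaves]; exact Finset.inter_subset_left
          · intro x hx y hy hne
            obtain ⟨hxA, hyA⟩ := husupp x y hne
            exact ⟨by rw [hL'leaves]; exact Finset.mem_inter.2 ⟨hx, hxA⟩,
              by rw [hR'leaves]; exact Finset.mem_inter.2 ⟨hy, hyA⟩⟩
        have hgle : g L'.leaves.card R'.leaves.card ≤ g L.leaves.card R.leaves.card := by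
          refine gmono _ _ _ _ (card_leaves_pos L') (card_leaves_pos R') ?_ ?_
          · exact Finset.card_le_card (by rw [hL'leaves]; exact Finset.inter_subset_left)
          · exact Finset.card_le_card (by rw [hR'leaves]; exact Finset.inter_subset_left)
        rw [treeCost, treeCost, ← hcuteq]
        have := mul_le_mul_of_nonneg_left hgle (cutWeight_nonneg hu0 L.leaves R.leaves)
        linarith

theorem restr_eq_of_node {A : Finset V} {T N : ClusterTree V}
    (hnd : T.leavesList.Nodup) (hN : IsSubtreeOf N T) (hNA : N.leaves = A) :
    restr A T = some N := by
  induction T with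
  | leaf v =>
    rw [IsSubtreeOf] at hN
    subst hN
    rw [restr, if_pos]
    rw [← hNA, leaves_leaf]; exact Finset.mem_singleton_self v
  | node L R ihL ihR =>
    obtain ⟨hndL, hndR, hdisj⟩ := nodup_node hnd
    rcases hN with hN | hN | hN
    · subst hN
      exact restr_of_subset (hNA ▸ subset_rfl)
    · have hAL : A ⊆ L.leaves := hNA ▸ leaves_subset_of_isSubtreeOf hN
      have hRnone : restr A R = none :=
        restr_eq_none_iff.2 fun x hx hxA =>
          (Finset.disjoint_left.1 hdisj (hAL hxA)) hx
      rw [restr, ihL hndL hN, hRnone]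
    · have hAR : A ⊆ R.leaves := hNA ▸ leaves_subset_of_isSubtreeOf hN
      have hLnone : restr A L = none :=
        restr_eq_none_iff.2 fun x hx hxA =>
          (Finset.disjoint_left.1 hdisj hx) (hAR hxA)
      rw [restr, hLnone]
      exact ihR hndR hN

theorem cost_eq_of_node {u : V → V → ℝ} {g : ℕ → ℕ → ℝ} {A : Finset V}
    (husupp : ∀ x y, u x y ≠ 0 → x ∈ A ∧ y ∈ A) {T N : ClusterTree V}
    (hnd : T.leavesList.Nodup) (hN : IsSubtreeOf N T) (hNA : N.leaves = A) :
    treeCost u g T = treeCost u g N := by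
  induction T with
  | leaf v => rw [IsSubtreeOf] at hN; rw [hN]
  | node L R ihL ihR =>
    obtain ⟨hndL, hndR, hdisj⟩ := nodup_node hnd
    rcases hN with hN | hN | hN
    · rw [hN]
    · have hAL : A ⊆ L.leaves := hNA ▸ leaves_subset_of_isSubtreeOf hN
      have hcut : cutWeight u L.leaves R.leaves = 0 := by
        refine Finset.sum_eq_zero fun x hx => Finset.sum_eq_zero fun y hy => ?_
        by_contra h
        exact (Finset.disjoint_left.1 hdisj (hAL (husupp x y h).2)) hy
      have hcR : treeCost u g R = 0 :=
        treeCost_eq_zero_of_disjoint husupp fun x hx hxA =>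
          (Finset.disjoint_left.1 hdisj (hAL hxA)) hx
      rw [treeCost, hcut, hcR, ihL hndL hN]; ring
    · have hAR : A ⊆ R.leaves := hNA ▸ leaves_subset_of_isSubtreeOf hN
      have hcut : cutWeight u L.leaves R.leaves = 0 := by
        refine Finset.sum_eq_zero fun x hx => Finset.sum_eq_zero fun y hy => ?_
        by_contra h
        exact (Finset.disjoint_left.1 hdisj hx) (hAR (husupp x y h).1)
      have hcL : treeCost u g L = 0 :=
        treeCost_eq_zero_of_disjoint husupp fun x hx hxA =>
          (Finset.disjoint_left.1 hdisj hx) (hAR hxA)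
      rw [treeCost, hcut, hcL, ihR hndR hN]; ring

theorem restr_cost_lt {u : V → V → ℝ} {g : ℕ → ℕ → ℝ} {A : Finset V}
    (hu0 : ∀ x y, 0 ≤ u x y)
    (husupp : ∀ x y, u x y ≠ 0 → x ∈ A ∧ y ∈ A)
    (hupos : ∀ x y, x ∈ A → y ∈ A → x ≠ y → 0 < u x y)
    (hgnn : ∀ a b, 0 ≤ g a b)
    (gmono : ∀ a b a' b' : ℕ, 1 ≤ a → 1 ≤ b → a ≤ a' → b ≤ b' → g a b ≤ g a' b')
    (gcomb : ∀ a b a' b' : ℕ, 1 ≤ a → 1 ≤ b → a ≤ a' → b ≤ b' → (a < a' ∨ b < b') →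
      g a b < g a' b')
    (hA2 : ∃ x ∈ A, ∃ y ∈ A, x ≠ y) :
    ∀ T : ClusterTree V, T.leavesList.Nodup → A ⊆ T.leaves →
      (∀ N, IsSubtreeOf N T → N.leaves ≠ A) →
      (restr A T).elim 0 (treeCost u g) < treeCost u g T := by
  intro T
  induction T with
  | leaf v =>
    intro _ hsub _
    obtain ⟨x, hx, y, hy, hxy⟩ := hA2
    have hx' := hsub hx; have hy' := hsub hy
    rw [leaves_leaf, Finset.mem_singleton] at hx' hy'
    exact absurd (hx'.trans hy'.symm) hxy
  | node L R ihL ihR =>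
    intro hnd hsub hno
    obtain ⟨hndL, hndR, hdisj⟩ := nodup_node hnd
    have hcut0 : 0 ≤ cutWeight u L.leaves R.leaves * g L.leaves.card R.leaves.card :=
      mul_nonneg (cutWeight_nonneg hu0 _ _) (hgnn _ _)
    have hcL : 0 ≤ treeCost u g L := treeCost_nonneg hu0 hgnn L
    have hcR : 0 ≤ treeCost u g R := treeCost_nonneg hu0 hgnn R
    obtain ⟨x1, hx1A⟩ : A.Nonempty := by
      obtain ⟨x, hx, _⟩ := hA2; exact ⟨x, hx⟩
    by_cases h1 : ∀ x ∈ A, x ∈ L.leaves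
    · have hRnone : restr A R = none :=
        restr_eq_none_iff.2 fun x hx hxA =>
          (Finset.disjoint_left.1 hdisj (h1 x hxA)) hx
      obtain ⟨L', hL'⟩ := restr_isSome (h1 x1 hx1A) hx1A
      rw [restr, hL', hRnone]
      simp only [Option.elim]
      have := ihL hndL h1 (fun N hN =>
        hno N (isSubtreeOf_trans hN (isSubtreeOf_node_left L R)))
      rw [hL'] at this
      simp only [Option.elim] at this
      rw [treeCost]; linarith
    · by_cases h2 : ∀ x ∈ A, x ∈ R.leaves
      · have hLnone : restr A L = none :=
          restr_eq_none_iff.2 fun x hx hxA =>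
            (Finset.disjoint_left.1 hdisj hx) (h2 x hxA)
        obtain ⟨R', hR'⟩ := restr_isSome (h2 x1 hx1A) hx1A
        rw [restr, hLnone, hR']
        simp only [Option.elim]
        have := ihR hndR h2 (fun N hN =>
          hno N (isSubtreeOf_trans hN (isSubtreeOf_node_right L R)))
        rw [hR'] at this
        simp only [Option.elim] at this
        rw [treeCost]; linarith
      · -- both sides meet A
        push_neg at h1 h2
        obtain ⟨xR, hxRA, hxRL⟩ := h1
        obtain ⟨xL, hxLA, hxLR⟩ := h2
        have hxLL : xL ∈ L.leaves := by
          have := hsub hxLA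
          rw [leaves_node, Finset.mem_union] at this
          tauto
        have hxRR : xR ∈ R.leaves := by
          have := hsub hxRA
          rw [leaves_node, Finset.mem_union] at this
          tauto
        obtain ⟨L', hL'⟩ := restr_isSome hxLL hxLA
        obtain ⟨R', hR'⟩ := restr_isSome hxRR hxRA
        rw [restr, hL', hR']
        simp only [Option.elim]
        obtain ⟨hL'leaves, _⟩ := restr_some_spec hL'
        obtain ⟨hR'leaves, _⟩ := restr_some_spec hR'
        have hcuteq : cutWeight u L.leaves R.leaves
            = cutWeight u L'.leaves R'.leaves := by
          refine cutWeight_subset' ?_ ?_ ?_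
          · rw [hL'leaves]; exact Finset.inter_subset_left
          · rw [hR'leaves]; exact Finset.inter_subset_left
          · intro x hx y hy hne
            obtain ⟨hxA, hyA⟩ := husupp x y hne
            exact ⟨by rw [hL'leaves]; exact Finset.mem_inter.2 ⟨hx, hxA⟩,
              by rw [hR'leaves]; exact Finset.mem_inter.2 ⟨hy, hyA⟩⟩
        have hcutpos : 0 < cutWeight u L.leaves R.leaves := by
          have hxy : xL ≠ xR := fun h =>
            (Finset.disjoint_left.1 hdisj hxLL) (h ▸ hxRR)
          have h1' : u xL xR ≤ ∑ y ∈ R.leaves, u xL y :=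
            Finset.single_le_sum (f := fun y => u xL y) (fun y _ => hu0 xL y) hxRR
          have h2' : (∑ y ∈ R.leaves, u xL y) ≤ cutWeight u L.leaves R.leaves :=
            Finset.single_le_sum (f := fun x => ∑ y ∈ R.leaves, u x y)
              (fun x _ => Finset.sum_nonneg fun y _ => hu0 x y) hxLL
          have := hupos xL xR hxLA hxRA hxy
          linarith
        -- a leaf outside A
        have hAne : (ClusterTree.node L R).leaves ≠ A :=
          hno _ (isSubtreeOf_self _)
        obtain ⟨z, hz, hzA⟩ : ∃ z ∈ (ClusterTree.node L R).leaves, z ∉ A := by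
          by_contra h
          push_neg at h
          exact hAne (Finset.Subset.antisymm h hsub)
        have hglt : g L'.leaves.card R'.leaves.card < g L.leaves.card R.leaves.card := by
          have hsubL : L'.leaves ⊆ L.leaves := by
            rw [hL'leaves]; exact Finset.inter_subset_left
          have hsubR : R'.leaves ⊆ R.leaves := by
            rw [hR'leaves]; exact Finset.inter_subset_left
          refine gcomb _ _ _ _ (card_leaves_pos L') (card_leaves_pos R')
            (Finset.card_le_card hsubL) (Finset.card_le_card hsubR) ?_
          rw [leaves_node, Finset.mem_union] at hz
          rcases hz with hz | hz
          · left
            refine Finset.card_lt_card (Finset.ssubset_iff_of_subset hsubL |>.2 ⟨z, hz, ?_⟩)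
            rw [hL'leaves]
            exact fun hmem => hzA (Finset.mem_inter.1 hmem).2
          · right
            refine Finset.card_lt_card (Finset.ssubset_iff_of_subset hsubR |>.2 ⟨z, hz, ?_⟩)
            rw [hR'leaves]
            exact fun hmem => hzA (Finset.mem_inter.1 hmem).2
        have hcostL : treeCost u g L' ≤ treeCost u g L := by
          have := restr_cost_le hu0 husupp hgnn gmono L
          rw [hL'] at this
          simpa using this
        have hcostR : treeCost u g R' ≤ treeCost u g R := by
          have := restr_cost_le hu0 husupp hgnn gmono R
          rw [hR'] at this
          simpa using this
        rw [treeCost, treeCost, ← hcuteq]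
        have := mul_lt_mul_of_pos_left hglt hcutpos
        linarith

/-! #### Blocks versus good trees -/

/-- If every block of the top-level partition appears as a good subtree, and all
cross-block weights equal the minimum `t`, then the tree is good. -/
theorem good_of_blocks {w : V → V → ℝ} {t : ℝ} {P : V → Finset V} :
    ∀ T : ClusterTree V, T.leavesList.Nodup →
      (∀ x ∈ T.leaves, x ∈ P x) →
      (∀ x ∈ T.leaves, ∀ y ∈ T.leaves, y ∉ P x → w x y = t) →
      (∀ x ∈ T.leaves, ∀ y ∈ T.leaves, x ≠ y → t ≤ w x y) →
      (∀ x ∈ T.leaves, ∃ N, IsSubtreeOf N T ∧ N.leaves = P x ∧ good w N) →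
      good w T := by
  intro T
  induction T with
  | leaf v => intro _ _ _ _ _; trivial
  | node L R ihL ihR =>
    intro hnd h1 hcross hmin hblocks
    obtain ⟨hndL, hndR, hdisj⟩ := nodup_node hnd
    have hLsub : L.leaves ⊆ (ClusterTree.node L R).leaves := by
      rw [leaves_node]; exact Finset.subset_union_left
    have hRsub : R.leaves ⊆ (ClusterTree.node L R).leaves := by
      rw [leaves_node]; exact Finset.subset_union_right
    by_cases hwhole : ∃ x ∈ (ClusterTree.node L R).leaves,
        P x = (ClusterTree.node L R).leaves
    · obtain ⟨x, hx, hPx⟩ := hwhole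
      obtain ⟨N, hN, hNl, hNg⟩ := hblocks x hx
      rw [hPx] at hNl
      rw [← eq_of_isSubtreeOf_leaves_eq hN hnd hNl]
      exact hNg
    · push_neg at hwhole
      -- every block lies wholly in L or in R
      have hside : ∀ x ∈ (ClusterTree.node L R).leaves,
          ∃ N, (IsSubtreeOf N L ∨ IsSubtreeOf N R) ∧ N.leaves = P x ∧ good w N := by
        intro x hx
        obtain ⟨N, hN, hNl, hNg⟩ := hblocks x hx
        rcases hN with hN | hN | hN
        · exfalso
          exact hwhole x hx (by rw [← hNl, hN])
        · exact ⟨N, Or.inl hN, hNl, hNg⟩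
        · exact ⟨N, Or.inr hN, hNl, hNg⟩
      have hsideL : ∀ x ∈ L.leaves, P x ⊆ L.leaves := by
        intro x hx
        obtain ⟨N, hN, hNl, _⟩ := hside x (hLsub hx)
        rcases hN with hN | hN
        · exact hNl ▸ leaves_subset_of_isSubtreeOf hN
        · exfalso
          have := leaves_subset_of_isSubtreeOf hN (hNl ▸ h1 x (hLsub hx))
          exact (Finset.disjoint_left.1 hdisj hx) this
      have hsideR : ∀ x ∈ R.leaves, P x ⊆ R.leaves := by
        intro x hx
        obtain ⟨N, hN, hNl, _⟩ := hside x (hRsub hx)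
        rcases hN with hN | hN
        · exfalso
          have := leaves_subset_of_isSubtreeOf hN (hNl ▸ h1 x (hRsub hx))
          exact (Finset.disjoint_left.1 hdisj this) hx
        · exact hNl ▸ leaves_subset_of_isSubtreeOf hN
      have hcrossLR : ∀ x ∈ L.leaves, ∀ y ∈ R.leaves, w x y = t := by
        intro x hx y hy
        refine hcross x (hLsub hx) y (hRsub hy) fun hyP => ?_
        exact (Finset.disjoint_left.1 hdisj (hsideL x hx hyP)) hy
      refine ⟨?_, ?_, ?_, ?_, ?_⟩
      · intro x hx y hy x' hx' y' hy'
        rw [hcrossLR x hx y hy, hcrossLR x' hx' y' hy']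
      · intro x hx y hy u hu v hv huv
        rw [hcrossLR x hx y hy]
        exact hmin u (hLsub hu) v (hLsub hv) huv
      · intro x hx y hy u hu v hv huv
        rw [hcrossLR x hx y hy]
        exact hmin u (hRsub hu) v (hRsub hv) huv
      · refine ihL hndL (fun x hx => h1 x (hLsub hx))
          (fun x hx y hy hyP => hcross x (hLsub hx) y (hLsub hy) hyP)
          (fun x hx y hy hxy => hmin x (hLsub hx) y (hLsub hy) hxy) ?_
        intro x hx
        obtain ⟨N, hN, hNl, hNg⟩ := hside x (hLsub hx)
        rcases hN with hN | hN
        · exact ⟨N, hN, hNl, hNg⟩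
        · exfalso
          have := leaves_subset_of_isSubtreeOf hN (hNl ▸ h1 x (hLsub hx))
          exact (Finset.disjoint_left.1 hdisj hx) this
      · refine ihR hndR (fun x hx => h1 x (hRsub hx))
          (fun x hx y hy hyP => hcross x (hRsub hx) y (hRsub hy) hyP)
          (fun x hx y hy hxy => hmin x (hRsub hx) y (hRsub hy) hxy) ?_
        intro x hx
        obtain ⟨N, hN, hNl, hNg⟩ := hside x (hRsub hx)
        rcases hN with hN | hN
        · exfalso
          have := leaves_subset_of_isSubtreeOf hN (hNl ▸ h1 x (hRsub hx))
          exact (Finset.disjoint_left.1 hdisj this) hx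
        · exact ⟨N, hN, hNl, hNg⟩

/-- In a good tree, every block of the top-level partition appears as a subtree. -/
theorem blocks_of_good {w : V → V → ℝ} {t : ℝ} {P : V → Finset V} :
    ∀ T : ClusterTree V, T.leavesList.Nodup → good w T →
      (∀ x ∈ T.leaves, x ∈ P x) →
      (∀ x ∈ T.leaves, P x ⊆ T.leaves) →
      (∀ x ∈ T.leaves, ∀ y, y ∈ P x → P y = P x) →
      (∀ x ∈ T.leaves, ∀ y ∈ T.leaves, x ≠ y → y ∈ P x → t < w x y) →
      (∀ x ∈ T.leaves, ∀ y ∈ T.leaves, t < w x y → y ∈ P x) →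
      ∀ x ∈ T.leaves, ∃ N, IsSubtreeOf N T ∧ N.leaves = P x := by
  intro T
  induction T with
  | leaf v =>
    intro _ _ h1 h4 _ _ _ x hx
    rw [leaves_leaf, Finset.mem_singleton] at hx
    subst hx
    refine ⟨ClusterTree.leaf x, isSubtreeOf_self _, ?_⟩
    rw [leaves_leaf]
    refine Finset.Subset.antisymm ?_
      (h4 x (by rw [leaves_leaf]; exact Finset.mem_singleton_self x))
    rw [Finset.singleton_subset_iff]
    exact h1 x (by rw [leaves_leaf]; exact Finset.mem_singleton_self x)
  | node L R ihL ihR =>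
    intro hnd hgood h1 h4 h5 h2 h3
    obtain ⟨hndL, hndR, hdisj⟩ := nodup_node hnd
    have hLsub : L.leaves ⊆ (ClusterTree.node L R).leaves := by
      rw [leaves_node]; exact Finset.subset_union_left
    have hRsub : R.leaves ⊆ (ClusterTree.node L R).leaves := by
      rw [leaves_node]; exact Finset.subset_union_right
    by_cases hspan : ∃ a ∈ L.leaves, ∃ b ∈ R.leaves, b ∈ P a
    · -- a spanning block: it must be everything
      obtain ⟨a, ha, b, hb, hbPa⟩ := hspan
      have hab : a ≠ b := fun h => (Finset.disjoint_left.1 hdisj ha) (h ▸ hb)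
      have hwab : t < w a b := h2 a (hLsub ha) b (hRsub hb) hab hbPa
      have hPa : P a = (ClusterTree.node L R).leaves := by
        refine Finset.Subset.antisymm (h4 a (hLsub ha)) ?_
        intro z hz
        rw [leaves_node, Finset.mem_union] at hz
        rcases hz with hz | hz
        · -- z in L: w z b = w a b > t
          have hzb : w z b = w a b := hgood.1 z hz b hb a ha b hb
          have hbPz : b ∈ P z := h3 z (hLsub hz) b (hRsub hb) (hzb ▸ hwab)
          have : P b = P z := h5 z (hLsub hz) b hbPz
          have hPba : P b = P a := h5 a (hLsub ha) b hbPa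
          rw [← hPba, this]
          exact h1 z (hLsub hz)
        · -- z in R: w a z = w a b > t
          have haz : w a z = w a b := hgood.1 a ha z hz a ha b hb
          exact h3 a (hLsub ha) z (hRsub hz) (haz ▸ hwab)
      intro x hx
      have hxPa : x ∈ P a := hPa ▸ hx
      have : P x = P a := h5 a (hLsub ha) x hxPa
      exact ⟨ClusterTree.node L R, isSubtreeOf_self _, by rw [this, hPa]⟩
    · -- no spanning block
      push_neg at hspan
      have hsideL : ∀ x ∈ L.leaves, P x ⊆ L.leaves := by
        intro x hx y hy
        have hyT := h4 x (hLsub hx) hy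
        rw [leaves_node, Finset.mem_union] at hyT
        rcases hyT with h | h
        · exact h
        · exact absurd hy (hspan x hx y h)
      have hsideR : ∀ x ∈ R.leaves, P x ⊆ R.leaves := by
        intro x hx y hy
        have hyT := h4 x (hRsub hx) hy
        rw [leaves_node, Finset.mem_union] at hyT
        rcases hyT with h | h
        · -- y ∈ L, y ∈ P x with x ∈ R: spanning via y's block
          exfalso
          have hPxy : P y = P x := h5 x (hRsub hx) y hy
          have hxPy : x ∈ P y := hPxy ▸ h1 x (hRsub hx)
          exact hspan y h x hx hxPy
        · exact h
      intro x hx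
      rw [leaves_node, Finset.mem_union] at hx
      rcases hx with hx | hx
      · obtain ⟨N, hN, hNl⟩ := ihL hndL hgood.2.2.2.1
          (fun z hz => h1 z (hLsub hz)) hsideL
          (fun z hz y hy => h5 z (hLsub hz) y hy)
          (fun z hz y hy hzy hyP => h2 z (hLsub hz) y (hLsub hy) hzy hyP)
          (fun z hz y hy hwt => h3 z (hLsub hz) y (hLsub hy) hwt) x hx
        exact ⟨N, isSubtreeOf_trans hN (isSubtreeOf_node_left L R), hNl⟩
      · obtain ⟨N, hN, hNl⟩ := ihR hndR hgood.2.2.2.2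
          (fun z hz => h1 z (hRsub hz)) hsideR
          (fun z hz y hy => h5 z (hRsub hz) y hy)
          (fun z hz y hy hzy hyP => h2 z (hRsub hz) y (hRsub hy) hzy hyP)
          (fun z hz y hy hwt => h3 z (hRsub hz) y (hRsub hy) hwt) x hx
        exact ⟨N, isSubtreeOf_trans hN (isSubtreeOf_node_right L R), hNl⟩

/-! #### Caterpillar trees and clique costs -/

theorem leavesList_spineTree :
    ∀ (l : List V) (t : ClusterTree V),
      (spineTree t l).leavesList = t.leavesList ++ l := by
  intro l
  induction l with
  | nil => intro t; simp [spineTree]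
  | cons v vs ih =>
    intro t
    rw [spineTree, ih]
    simp [ClusterTree.leavesList]

theorem leaves_spineTree (l : List V) (t : ClusterTree V) :
    (spineTree t l).leaves = t.leaves ∪ l.toFinset := by
  rw [ClusterTree.leaves, leavesList_spineTree, List.toFinset_append]
  rfl

theorem cutWeight_clique_disjoint {A B : Finset V} (h : Disjoint A B) :
    cutWeight (cliqueW V) A B = (A.card : ℝ) * (B.card : ℝ) := by
  have := cutWeight_const (w := cliqueW V) (A := A) (B := B) (c := 1)
    (fun x hx y hy => by
      rw [cliqueW, if_neg]
      intro he
      exact (Finset.disjoint_left.1 h hx) (he ▸ hy))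
  rw [this]; ring

theorem treeCost_spineTree_clique (g : ℕ → ℕ → ℝ) :
    ∀ (l : List V) (t : ClusterTree V), (t.leavesList ++ l).Nodup →
      treeCost (cliqueW V) g (spineTree t l) = treeCost (cliqueW V) g t +
        ∑ j ∈ Finset.range l.length,
          ((t.leaves.card + j : ℕ) : ℝ) * g (t.leaves.card + j) 1 := by
  intro l
  induction l with
  | nil => intro t _; simp [spineTree]
  | cons v vs ih =>
    intro t hnd
    rw [spineTree]
    have hnd' : ((ClusterTree.node t (ClusterTree.leaf v)).leavesList ++ vs).Nodup := by
      have : (ClusterTree.node t (ClusterTree.leaf v)).leavesList ++ vs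
          = t.leavesList ++ (v :: vs) := by
        simp [ClusterTree.leavesList]
      rw [this]
      exact hnd
    rw [ih _ hnd']
    have hvt : v ∉ t.leaves := by
      rw [List.nodup_append] at hnd
      intro h
      exact hnd.2.2 _ (mem_leaves.1 h) _ List.mem_cons_self rfl
    have hnode : treeCost (cliqueW V) g (ClusterTree.node t (ClusterTree.leaf v))
        = treeCost (cliqueW V) g t + (t.leaves.card : ℝ) * g t.leaves.card 1 := by
      rw [treeCost]
      have hd : Disjoint t.leaves (ClusterTree.leaf v).leaves := by
        rw [leaves_leaf, Finset.disjoint_singleton_right]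
        exact hvt
      rw [cutWeight_clique_disjoint hd, leaves_leaf, Finset.card_singleton]
      simp [treeCost]
      ring
    have hcard : (ClusterTree.node t (ClusterTree.leaf v)).leaves.card
        = t.leaves.card + 1 := by
      rw [leaves_node, leaves_leaf, Finset.union_comm,
        ← Finset.insert_eq, Finset.card_insert_of_notMem hvt]
    rw [hnode, hcard]
    rw [List.length_cons, Finset.sum_range_succ'
      (fun j => ((t.leaves.card + j : ℕ) : ℝ) * g (t.leaves.card + j) 1) vs.length]
    have : ∀ j, t.leaves.card + 1 + j = t.leaves.card + (j + 1) := by omega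
    rw [Finset.sum_congr rfl (fun j _ => by rw [this j])]
    simp
    ring

/-- Cost of a caterpillar over a clique equals `cliqueTreeCost`. -/
theorem treeCost_caterpillar_clique (g : ℕ → ℕ → ℝ) (v : V) (l : List V)
    (hnd : (v :: l).Nodup) :
    treeCost (cliqueW V) g (spineTree (ClusterTree.leaf v) l)
      = cliqueTreeCost g (l.length + 1) := by
  have h := treeCost_spineTree_clique g l (ClusterTree.leaf v)
    (by simpa [ClusterTree.leavesList] using hnd)
  rw [h]
  have : treeCost (cliqueW V) g (ClusterTree.leaf v) = 0 := rfl
  rw [this, leaves_leaf, Finset.card_singleton, cliqueTreeCost]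
  rw [Finset.sum_range_succ' (fun i => (i : ℝ) * g i 1) l.length]
  simp [add_comm]

/-- The split relation for the clique invariant, from condition (1). -/
theorem splitK (g : ℕ → ℕ → ℝ)
    (hclique : ∀ (V : Type) [Fintype V] [DecidableEq V] (T T' : ClusterTree V),
      IsClusterTree T → IsClusterTree T' →
      treeCost (cliqueW V) g T = treeCost (cliqueW V) g T')
    (a b : ℕ) (ha : 1 ≤ a) (hb : 1 ≤ b) :
    cliqueTreeCost g (a + b) = (a : ℝ) * b * g a b
      + cliqueTreeCost g a + cliqueTreeCost g b := by
  classical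
  set n := a + b with hn
  have hl : (List.finRange n).length = n := List.length_finRange
  have hndl : (List.finRange n).Nodup := List.nodup_finRange n
  -- split the list
  set l1 := (List.finRange n).take a with hl1
  set l2 := (List.finRange n).drop a with hl2
  have hto : l1 ++ l2 = List.finRange n := List.take_append_drop a _
  have hl1len : l1.length = a := by
    rw [hl1, List.length_take, hl]; omega
  have hl2len : l2.length = b := by
    rw [hl2, List.length_drop, hl]; omega
  have hndsplit : (l1 ++ l2).Nodup := by rw [hto]; exact hndl
  obtain ⟨x1, t1, hx1⟩ : ∃ x t, l1 = x :: t := by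
    cases hc : l1 with
    | nil => rw [hc] at hl1len; simp at hl1len; omega
    | cons x t => exact ⟨x, t, rfl⟩
  obtain ⟨x2, t2, hx2⟩ : ∃ x t, l2 = x :: t := by
    cases hc : l2 with
    | nil => rw [hc] at hl2len; simp at hl2len; omega
    | cons x t => exact ⟨x, t, rfl⟩
  obtain ⟨y, ys, hy⟩ : ∃ x t, List.finRange n = x :: t := by
    cases hc : List.finRange n with
    | nil => rw [hc] at hl; simp at hl; omega
    | cons x t => exact ⟨x, t, rfl⟩
  -- the caterpillar
  set T1 : ClusterTree (Fin n) := spineTree (ClusterTree.leaf y) ys with hT1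
  have hT1list : T1.leavesList = List.finRange n := by
    rw [hT1, leavesList_spineTree, hy]; rfl
  have hT1ct : IsClusterTree T1 := by
    constructor
    · rw [hT1list]; exact hndl
    · rw [ClusterTree.leaves, hT1list]
      ext i; simp [List.mem_finRange]
  -- the two-block tree
  set S1 : ClusterTree (Fin n) := spineTree (ClusterTree.leaf x1) t1 with hS1
  set S2 : ClusterTree (Fin n) := spineTree (ClusterTree.leaf x2) t2 with hS2
  have hS1list : S1.leavesList = l1 := by
    rw [hS1, leavesList_spineTree, hx1]; rfl
  have hS2list : S2.leavesList = l2 := by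
    rw [hS2, leavesList_spineTree, hx2]; rfl
  set T2 : ClusterTree (Fin n) := ClusterTree.node S1 S2 with hT2
  have hT2list : T2.leavesList = List.finRange n := by
    rw [hT2, ClusterTree.leavesList, hS1list, hS2list, hto]
  have hT2ct : IsClusterTree T2 := by
    constructor
    · rw [hT2list]; exact hndl
    · rw [ClusterTree.leaves, hT2list]
      ext i; simp [List.mem_finRange]
  have hnd1 : l1.Nodup := (List.nodup_append.1 hndsplit).1
  have hnd2 : l2.Nodup := (List.nodup_append.1 hndsplit).2.1
  -- costs
  have hc1 : treeCost (cliqueW (Fin n)) g T1 = cliqueTreeCost g n := by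
    rw [hT1, treeCost_caterpillar_clique g y ys (by rw [← hy]; exact hndl)]
    congr 1
    have : (y :: ys).length = n := by rw [← hy, hl]
    simpa using this
  have hcS1 : treeCost (cliqueW (Fin n)) g S1 = cliqueTreeCost g a := by
    rw [hS1, treeCost_caterpillar_clique g x1 t1 (by rw [← hx1]; exact hnd1)]
    congr 1
    have : (x1 :: t1).length = a := by rw [← hx1, hl1len]
    simpa using this
  have hcS2 : treeCost (cliqueW (Fin n)) g S2 = cliqueTreeCost g b := by
    rw [hS2, treeCost_caterpillar_clique g x2 t2 (by rw [← hx2]; exact hnd2)]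
    congr 1
    have : (x2 :: t2).length = b := by rw [← hx2, hl2len]
    simpa using this
  have hS1card : S1.leaves.card = a := by
    rw [ClusterTree.leaves, hS1list, List.toFinset_card_of_nodup hnd1, hl1len]
  have hS2card : S2.leaves.card = b := by
    rw [ClusterTree.leaves, hS2list, List.toFinset_card_of_nodup hnd2, hl2len]
  have hdisj : Disjoint S1.leaves S2.leaves := by
    rw [Finset.disjoint_left]
    intro i hi1 hi2
    rw [mem_leaves, hS1list] at hi1
    rw [mem_leaves, hS2list] at hi2
    rw [List.nodup_append] at hndsplit
    exact hndsplit.2.2 _ hi1 _ hi2 rfl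
  have hc2 : treeCost (cliqueW (Fin n)) g T2
      = (a : ℝ) * b * g a b + cliqueTreeCost g a + cliqueTreeCost g b := by
    rw [hT2, treeCost, cutWeight_clique_disjoint hdisj, hS1card, hS2card, hcS1, hcS2]
  rw [← hc1, ← hc2]
  exact hclique (Fin n) T1 T2 hT1ct hT2ct

/-- Any nodup tree has the invariant clique cost. -/
theorem treeCost_clique_eq (g : ℕ → ℕ → ℝ)
    (hsplit : ∀ a b : ℕ, 1 ≤ a → 1 ≤ b → cliqueTreeCost g (a + b)
      = (a : ℝ) * b * g a b + cliqueTreeCost g a + cliqueTreeCost g b) :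
    ∀ T : ClusterTree V, T.leavesList.Nodup →
      treeCost (cliqueW V) g T = cliqueTreeCost g T.leaves.card := by
  intro T
  induction T with
  | leaf v =>
    intro _
    rw [leaves_leaf, Finset.card_singleton]
    simp [treeCost, cliqueTreeCost]
  | node L R ihL ihR =>
    intro hnd
    obtain ⟨hndL, hndR, hdisj⟩ := nodup_node hnd
    rw [treeCost, cutWeight_clique_disjoint hdisj, ihL hndL, ihR hndR,
      card_leaves_node hnd,
      hsplit L.leaves.card R.leaves.card (card_leaves_pos L) (card_leaves_pos R)]

/-! #### Monotonicity helpers for `g` -/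

theorem gmono_of (g : ℕ → ℕ → ℝ)
    (hsymm : ∀ n1 n2 : ℕ, 1 ≤ n1 → 1 ≤ n2 → g n1 n2 = g n2 n1)
    (hstrict : ∀ n1 n2 : ℕ, 1 ≤ n1 → 1 ≤ n2 → g n1 n2 < g (n1 + 1) n2) :
    ∀ a b a' b' : ℕ, 1 ≤ a → 1 ≤ b → a ≤ a' → b ≤ b' → g a b ≤ g a' b' := by
  have hmono1 : ∀ b a a' : ℕ, 1 ≤ b → 1 ≤ a → a ≤ a' → g a b ≤ g a' b := by
    intro b a a' hb ha h
    induction a' , h using Nat.le_induction with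
    | base => exact le_rfl
    | succ n hn ih => exact ih.trans (hstrict n b (ha.trans hn) hb).le
  intro a b a' b' ha hb haa hbb
  calc g a b ≤ g a' b := hmono1 b a a' hb ha haa
    _ = g b a' := hsymm a' b (ha.trans haa) hb
    _ ≤ g b' a' := hmono1 a' b b' (ha.trans haa) hb hbb
    _ = g a' b' := hsymm b' a' (hb.trans hbb) (ha.trans haa)

theorem gcomb_of (g : ℕ → ℕ → ℝ)
    (hsymm : ∀ n1 n2 : ℕ, 1 ≤ n1 → 1 ≤ n2 → g n1 n2 = g n2 n1)
    (hstrict : ∀ n1 n2 : ℕ, 1 ≤ n1 → 1 ≤ n2 → g n1 n2 < g (n1 + 1) n2) :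
    ∀ a b a' b' : ℕ, 1 ≤ a → 1 ≤ b → a ≤ a' → b ≤ b' → (a < a' ∨ b < b') →
      g a b < g a' b' := by
  have gmono := gmono_of g hsymm hstrict
  intro a b a' b' ha hb haa hbb hor
  rcases hor with h | h
  · calc g a b < g (a + 1) b := hstrict a b ha hb
      _ ≤ g a' b' := gmono (a + 1) b a' b' (by omega) hb (by omega) hbb
  · calc g a b = g b a := hsymm a b ha hb
      _ < g (b + 1) a := hstrict b a hb ha
      _ = g a (b + 1) := (hsymm a (b + 1) ha (by omega)).symm
      _ ≤ g a' b' := gmono a (b + 1) a' b' ha (by omega) haa (by omega)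

theorem nodup_node_of {L R : ClusterTree V} (h1 : L.leavesList.Nodup)
    (h2 : R.leavesList.Nodup) (hd : Disjoint L.leaves R.leaves) :
    (ClusterTree.node L R).leavesList.Nodup := by
  rw [ClusterTree.leavesList, List.nodup_append]
  exact ⟨h1, h2, fun a ha b hb hab =>
    (Finset.disjoint_left.1 hd (mem_leaves.2 ha)) (by subst hab; exact mem_leaves.2 hb)⟩

/-! #### The main induction -/

theorem main_induction {w : V → V → ℝ} (g : ℕ → ℕ → ℝ)
    (hg : ∀ a b : ℕ, 0 ≤ g a b)
    (hsym : ∀ x y, w x y = w y x)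
    (hdiag : ∀ x, w x x = 0)
    (hnn : ∀ x y, 0 ≤ w x y)
    (hult : ∀ x y z, x ≠ y → y ≠ z → x ≠ z → min (w x y) (w y z) ≤ w x z)
    (gmono : ∀ a b a' b' : ℕ, 1 ≤ a → 1 ≤ b → a ≤ a' → b ≤ b' → g a b ≤ g a' b')
    (gcomb : ∀ a b a' b' : ℕ, 1 ≤ a → 1 ≤ b → a ≤ a' → b ≤ b' → (a < a' ∨ b < b') →
      g a b < g a' b')
    (hsplit : ∀ a b : ℕ, 1 ≤ a → 1 ≤ b → cliqueTreeCost g (a + b)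
      = (a : ℝ) * b * g a b + cliqueTreeCost g a + cliqueTreeCost g b) :
    ∀ (S : Finset V), S.Nonempty →
      ∃ m : ℝ,
        (∃ T0 : ClusterTree V, T0.leavesList.Nodup ∧ T0.leaves = S ∧ good w T0) ∧
        (∀ T : ClusterTree V, T.leavesList.Nodup → T.leaves = S →
          m ≤ treeCost w g T ∧ (treeCost w g T = m ↔ good w T)) := by
  classical
  suffices H : ∀ n : ℕ, ∀ S : Finset V, S.card = n → S.Nonempty →
      ∃ m : ℝ,
        (∃ T0 : ClusterTree V, T0.leavesList.Nodup ∧ T0.leaves = S ∧ good w T0) ∧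
        (∀ T : ClusterTree V, T.leavesList.Nodup → T.leaves = S →
          m ≤ treeCost w g T ∧ (treeCost w g T = m ↔ good w T)) by
    intro S hS; exact H S.card S rfl hS
  intro n
  induction n using Nat.strong_induction_on with
  | _ n IH =>
  intro S hcard hS
  rcases Nat.lt_or_ge n 2 with hn2 | hn2
  · -- base case: S is a singleton
    have hn1 : n = 1 := by
      have := Finset.card_pos.2 hS
      omega
    obtain ⟨v, hv⟩ := Finset.card_eq_one.1 (by rw [hcard, hn1])
    refine ⟨0, ⟨ClusterTree.leaf v, by simp [ClusterTree.leavesList],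
      by rw [leaves_leaf, hv], trivial⟩, ?_⟩
    intro T hnd hTS
    have hT : T = ClusterTree.leaf v := by
      cases T with
      | leaf u =>
        have : u ∈ S := by rw [← hTS, leaves_leaf]; exact Finset.mem_singleton_self u
        rw [hv, Finset.mem_singleton] at this
        rw [this]
      | node L R =>
        exfalso
        have h2 : (ClusterTree.node L R).leaves.card = S.card := by rw [hTS]
        rw [card_leaves_node hnd, hcard, hn1] at h2
        have := card_leaves_pos L
        have := card_leaves_pos R
        omega
    subst hT
    refine ⟨le_of_eq rfl, ?_⟩
    constructor
    · intro _; trivial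
    · intro _; rfl
  · -- inductive step
    -- the minimum weight
    obtain ⟨x0, hx0S, y0, hy0S, hxy0⟩ := Finset.one_lt_card.1 (by omega : 1 < S.card)
    set pairs : Finset (V × V) := (S ×ˢ S).filter (fun p => p.1 ≠ p.2) with hpairs
    have hpne : pairs.Nonempty :=
      ⟨(x0, y0), by rw [hpairs]; simp [Finset.mem_filter, hx0S, hy0S, hxy0]⟩
    set t : ℝ := pairs.inf' hpne (fun p => w p.1 p.2) with ht
    have tmin : ∀ x ∈ S, ∀ y ∈ S, x ≠ y → t ≤ w x y := by
      intro x hx y hy hxy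
      exact Finset.inf'_le (fun p => w p.1 p.2)
        (show (x, y) ∈ pairs by rw [hpairs]; simp [Finset.mem_filter, hx, hy, hxy])
    obtain ⟨p0, hp0mem, hp0⟩ := Finset.exists_mem_eq_inf' hpne (fun p => w p.1 p.2)
    rw [hpairs, Finset.mem_filter, Finset.mem_product] at hp0mem
    have ht0 : 0 ≤ t := by rw [ht, hp0]; exact hnn p0.1 p0.2
    -- the blocks
    set bl : V → Finset V := fun x => S.filter (fun y => x = y ∨ t < w x y) with hbl
    have b1 : ∀ x ∈ S, x ∈ bl x := by
      intro x hx; rw [hbl]; simp [Finset.mem_filter, hx]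
    have b2 : ∀ x, bl x ⊆ S := fun x => Finset.filter_subset _ _
    have b5 : ∀ x, ∀ y ∈ bl x, x ≠ y → t < w x y := by
      intro x y hy hxy
      rw [hbl, Finset.mem_filter] at hy
      tauto
    have bmem : ∀ x, ∀ y ∈ bl x, y ∈ S := fun x y hy => b2 x hy
    have bsymm : ∀ x ∈ S, ∀ y, y ∈ bl x → x ∈ bl y := by
      intro x hx y hy
      have hyS := bmem x y hy
      rcases eq_or_ne x y with h | h
      · exact h ▸ b1 x hx
      · rw [hbl, Finset.mem_filter]
        exact ⟨hx, Or.inr (by rw [← hsym x y]; exact b5 x y hy h)⟩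
    have btrans : ∀ x ∈ S, ∀ y, y ∈ bl x → ∀ z, z ∈ bl y → z ∈ bl x := by
      intro x hx y hy z hz
      have hyS := bmem x y hy
      have hzS := bmem y z hz
      rcases eq_or_ne x y with h | h
      · exact h ▸ hz
      · rcases eq_or_ne y z with h' | h'
        · exact h' ▸ hy
        · rcases eq_or_ne x z with h'' | h''
          · exact h'' ▸ b1 x hx
          · have h1 := b5 x y hy h
            have h2 := b5 y z hz h'
            have h3 := hult x y z h h' h''
            rw [hbl, Finset.mem_filter]
            exact ⟨hzS, Or.inr (lt_of_lt_of_le (lt_min h1 h2) h3)⟩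
    have b3 : ∀ x ∈ S, ∀ y, y ∈ bl x → bl y = bl x := by
      intro x hx y hy
      have hyS := bmem x y hy
      ext z
      constructor
      · intro hz; exact btrans x hx y hy z hz
      · intro hz; exact btrans y hyS x (bsymm x hx y hy) z hz
    have b4 : ∀ x ∈ S, ∀ y ∈ S, y ∉ bl x → w x y = t := by
      intro x hx y hy hynot
      have hxy : x ≠ y := fun h => hynot (h ▸ b1 x hx)
      refine le_antisymm ?_ (tmin x hx y hy hxy)
      by_contra h
      push_neg at h
      exact hynot (by rw [hbl, Finset.mem_filter]; exact ⟨hy, Or.inr h⟩)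
    -- the set of blocks
    set Bl : Finset (Finset V) := S.image bl with hBl
    have hBlmem : ∀ B ∈ Bl, ∃ x ∈ S, bl x = B := by
      intro B hB; rw [hBl, Finset.mem_image] at hB; exact hB
    have hBxeq : ∀ B ∈ Bl, ∀ x ∈ B, B = bl x := by
      intro B hB x hx
      obtain ⟨z, hzS, hzB⟩ := hBlmem B hB
      rw [← hzB] at hx ⊢
      exact (b3 z hzS x hx).symm
    have hBsub : ∀ B ∈ Bl, B ⊆ S := by
      intro B hB
      obtain ⟨z, hzS, hzB⟩ := hBlmem B hB
      rw [← hzB]; exact b2 z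
    have hBne : ∀ B ∈ Bl, B.Nonempty := by
      intro B hB
      obtain ⟨z, hzS, hzB⟩ := hBlmem B hB
      exact ⟨z, hzB ▸ b1 z hzS⟩
    have hBcard : ∀ B ∈ Bl, B.card < n := by
      intro B hB
      obtain ⟨z, hzS, hzB⟩ := hBlmem B hB
      have hne : B ≠ S := by
        intro h
        -- then the min-attaining pair would be within one block
        have h1 : p0.1 ∈ bl z := by rw [hzB, h]; exact hp0mem.1.1
        have h2 : p0.2 ∈ bl z := by rw [hzB, h]; exact hp0mem.1.2
        have h3 : p0.2 ∈ bl p0.1 := by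
          rw [b3 z hzS p0.1 h1]
          exact h2
        have := b5 p0.1 p0.2 h3 hp0mem.2
        rw [← hp0] at this
        exact lt_irrefl t this
      rw [← hcard]
      refine Finset.card_lt_card (Finset.ssubset_iff_of_subset (hBsub B hB) |>.2 ?_)
      by_contra hcon
      push_neg at hcon
      exact hne (Finset.Subset.antisymm (hBsub B hB) hcon)
    have hblBl : ∀ x ∈ S, bl x ∈ Bl := by
      intro x hx; rw [hBl]; exact Finset.mem_image_of_mem bl hx
    -- the per-block weight functions
    set u : Finset V → V → V → ℝ :=
      fun B x y => if x ∈ B ∧ y ∈ B ∧ x ≠ y then w x y - t else 0 with hu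
    have hu0 : ∀ B ∈ Bl, ∀ x y, 0 ≤ u B x y := by
      intro B hB x y
      rw [hu]
      dsimp only
      split
      · next h =>
        obtain ⟨hx, hy, hxy⟩ := h
        have := tmin x (hBsub B hB hx) y (hBsub B hB hy) hxy
        linarith
      · exact le_rfl
    have husupp : ∀ B, ∀ x y, u B x y ≠ 0 → x ∈ B ∧ y ∈ B := by
      intro B x y h
      rw [hu] at h
      dsimp only at h
      by_contra hc
      rw [not_and_or] at hc
      have : ¬(x ∈ B ∧ y ∈ B ∧ x ≠ y) := by tauto
      rw [if_neg this] at h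
      exact h rfl
    have hupos : ∀ B ∈ Bl, ∀ x y, x ∈ B → y ∈ B → x ≠ y → 0 < u B x y := by
      intro B hB x y hx hy hxy
      have hBx := hBxeq B hB x hx
      have hyblx : y ∈ bl x := hBx ▸ hy
      have := b5 x y hyblx hxy
      rw [hu]
      dsimp only
      rw [if_pos ⟨hx, hy, hxy⟩]
      linarith
    -- pointwise decomposition
    have hpoint : ∀ x ∈ S, ∀ y ∈ S,
        w x y = t * cliqueW V x y + ∑ B ∈ Bl, u B x y := by
      intro x hx y hy
      rcases eq_or_ne x y with h | h
      · subst h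
        have : ∑ B ∈ Bl, u B x x = 0 :=
          Finset.sum_eq_zero fun B _ => by rw [hu]; simp
        rw [this, cliqueW, if_pos rfl, hdiag]; ring
      · rw [cliqueW, if_neg h]
        by_cases hyb : y ∈ bl x
        · have hsum : ∑ B ∈ Bl, u B x y = w x y - t := by
            rw [Finset.sum_eq_single (bl x)]
            · rw [hu]
              dsimp only
              rw [if_pos ⟨b1 x hx, hyb, h⟩]
            · intro B hB hBne
              rw [hu]
              dsimp only
              rw [if_neg]
              intro ⟨hxB, hyB, _⟩
              exact hBne ((hBxeq B hB x hxB).trans rfl)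
            · intro hc
              exact absurd (hblBl x hx) hc
          rw [hsum]; ring
        · have hsum : ∑ B ∈ Bl, u B x y = 0 := by
            refine Finset.sum_eq_zero fun B hB => ?_
            rw [hu]
            dsimp only
            rw [if_neg]
            intro ⟨hxB, hyB, _⟩
            exact hyb ((hBxeq B hB x hxB) ▸ hyB)
          rw [hsum, b4 x hx y hy hyb]; ring
    -- choose the IH data for each block
    have hIHp : ∀ p : {B // B ∈ Bl}, ∃ mB : ℝ,
        (∃ T0 : ClusterTree V, T0.leavesList.Nodup ∧ T0.leaves = p.1 ∧ good w T0) ∧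
        (∀ T : ClusterTree V, T.leavesList.Nodup → T.leaves = p.1 →
          mB ≤ treeCost w g T ∧ (treeCost w g T = mB ↔ good w T)) :=
      fun p => IH p.1.card (hBcard p.1 p.2) p.1 rfl (hBne p.1 p.2)
    choose mB hmBex hmBall using hIHp
    set K : ℕ → ℝ := cliqueTreeCost g with hK
    set m : ℝ := t * K n + ∑ p ∈ Bl.attach, (mB p - t * K p.1.card) with hm
    -- key identity for any tree on S
    have hcostid : ∀ T : ClusterTree V, T.leavesList.Nodup → T.leaves = S →
        treeCost w g T = t * K n + ∑ p ∈ Bl.attach, treeCost (u p.1) g T := by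
      intro T hnd hTS
      have h1 : treeCost w g T =
          treeCost (fun x y => t * cliqueW V x y + ∑ B ∈ Bl, u B x y) g T :=
        treeCost_congr (fun x hx y hy => hpoint x (hTS ▸ hx) y (hTS ▸ hy))
      rw [h1, treeCost_add, treeCost_smul, treeCost_finsum,
        treeCost_clique_eq g hsplit T hnd, hTS, hcard]
      rw [← Finset.sum_attach Bl (fun B => treeCost (u B) g T)]
    -- the restricted trees
    have hrestr : ∀ T : ClusterTree V, T.leavesList.Nodup → T.leaves = S →
        ∀ p : {B // B ∈ Bl}, ∃ TB : ClusterTree V, restr p.1 T = some TB ∧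
          TB.leaves = p.1 ∧ TB.leavesList.Nodup := by
      intro T hnd hTS p
      obtain ⟨z, hz⟩ := hBne p.1 p.2
      obtain ⟨TB, hTB⟩ := restr_isSome (T := T) (hTS ▸ hBsub p.1 p.2 hz) hz
      obtain ⟨hTBleaves, hTBnodup⟩ := restr_some_spec hTB
      refine ⟨TB, hTB, ?_, hTBnodup hnd⟩
      rw [hTBleaves, hTS]
      exact Finset.inter_eq_right.2 (hBsub p.1 p.2)
    -- per-block cost on the restricted tree
    have hkey : ∀ (TB : ClusterTree V), TB.leavesList.Nodup →
        ∀ p : {B // B ∈ Bl}, TB.leaves = p.1 →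
        treeCost (u p.1) g TB = treeCost w g TB - t * K p.1.card := by
      intro TB hnd p hleaves
      have h1 : treeCost (u p.1) g TB
          = treeCost (fun x y => w x y + (-t) * cliqueW V x y) g TB := by
        refine treeCost_congr fun x hx y hy => ?_
        rw [hleaves] at hx hy
        rcases eq_or_ne x y with h | h
        · subst h
          rw [hu]
          dsimp only
          rw [if_neg (by tauto), cliqueW, if_pos rfl, hdiag]
          ring
        · rw [hu]
          dsimp only
          rw [if_pos ⟨hx, hy, h⟩, cliqueW, if_neg h]
          ring
      rw [h1, treeCost_add, treeCost_smul, treeCost_clique_eq g hsplit TB hnd, hleaves]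
      ring
    refine ⟨m, ?_, ?_⟩
    · -- existence of a good tree on S
      -- first build, for each nonempty subfamily of blocks, a combined tree
      have hdisjB : ∀ B ∈ Bl, ∀ B' ∈ Bl, B ≠ B' → Disjoint B B' := by
        intro B hB B' hB' hne
        rw [Finset.disjoint_left]
        intro a haB haB'
        exact hne ((hBxeq B hB a haB).trans (hBxeq B' hB' a haB').symm)
      have hbuild : ∀ s : Finset (Finset V), s.Nonempty → s ⊆ Bl →
          ∃ T0 : ClusterTree V, T0.leavesList.Nodup ∧ T0.leaves = s.biUnion id ∧
            ∀ B ∈ s, ∃ N, IsSubtreeOf N T0 ∧ N.leaves = B ∧ good w N := by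
        intro s hs
        induction hs using Finset.Nonempty.cons_induction with
        | singleton B =>
          intro hsub
          obtain ⟨T0, hT0nd, hT0l, hT0g⟩ := hmBex ⟨B, hsub (Finset.mem_singleton_self B)⟩
          refine ⟨T0, hT0nd, by simpa using hT0l, ?_⟩
          intro B' hB'
          rw [Finset.mem_singleton] at hB'
          exact ⟨T0, isSubtreeOf_self _, by rw [hT0l, hB'], hT0g⟩
        | cons B s hBs hs ih =>
          intro hsub
          have hssub : s ⊆ Bl := fun B' hB' => hsub (Finset.mem_cons_of_mem hB')
          have hBBl : B ∈ Bl := hsub (Finset.mem_cons_self B s)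
          obtain ⟨T1, hT1nd, hT1l, hT1g⟩ := ih hssub
          obtain ⟨T2, hT2nd, hT2l, hT2g⟩ := hmBex ⟨B, hBBl⟩
          have hdisj : Disjoint T2.leaves T1.leaves := by
            rw [hT2l, hT1l, Finset.disjoint_biUnion_right]
            intro B' hB'
            refine hdisjB B hBBl B' (hssub hB') ?_
            intro h
            exact hBs (h ▸ hB')
          refine ⟨ClusterTree.node T2 T1, nodup_node_of hT2nd hT1nd hdisj, ?_, ?_⟩
          · rw [leaves_node, hT2l, hT1l, Finset.cons_eq_insert,
              Finset.biUnion_insert]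
            rfl
          · intro B' hB'
            rw [Finset.mem_cons] at hB'
            rcases hB' with hB' | hB'
            · exact ⟨T2, isSubtreeOf_node_left T2 T1, by rw [hT2l, hB'], hT2g⟩
            · obtain ⟨N, hN, hNl, hNg⟩ := hT1g B' hB'
              exact ⟨N, isSubtreeOf_trans hN (isSubtreeOf_node_right T2 T1), hNl, hNg⟩
      have hBlne : Bl.Nonempty := ⟨bl x0, hblBl x0 hx0S⟩
      obtain ⟨T0, hT0nd, hT0l, hT0bl⟩ := hbuild Bl hBlne subset_rfl
      have hT0S : T0.leaves = S := by
        rw [hT0l]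
        ext z
        rw [Finset.mem_biUnion]
        constructor
        · rintro ⟨B, hB, hz⟩; exact hBsub B hB hz
        · intro hz; exact ⟨bl z, hblBl z hz, b1 z hz⟩
      refine ⟨T0, hT0nd, hT0S, ?_⟩
      refine good_of_blocks T0 hT0nd (fun x hx => b1 x (hT0S ▸ hx))
        (fun x hx y hy hyP => b4 x (hT0S ▸ hx) y (hT0S ▸ hy) hyP)
        (fun x hx y hy hxy => tmin x (hT0S ▸ hx) y (hT0S ▸ hy) hxy) ?_
      intro x hx
      obtain ⟨N, hN, hNl, hNg⟩ := hT0bl (bl x) (hblBl x (hT0S ▸ hx))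
      exact ⟨N, hN, hNl, hNg⟩
    · -- minimality and the characterization
      intro T hnd hTS
      -- restricted trees
      have hres := hrestr T hnd hTS
      -- choose them
      choose TB hTBsome hTBleaves hTBnodup using hres
      -- decomposition of the cost difference
      have hsummand : ∀ p ∈ Bl.attach,
          (treeCost (u p.1) g T - treeCost (u p.1) g (TB p))
            + (treeCost w g (TB p) - mB p)
          = treeCost (u p.1) g T - (mB p - t * K p.1.card) := by
        intro p _
        rw [hkey (TB p) (hTBnodup p) p (hTBleaves p)]
        ring
      have hsum : treeCost w g T - m = ∑ p ∈ Bl.attach,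
          ((treeCost (u p.1) g T - treeCost (u p.1) g (TB p))
            + (treeCost w g (TB p) - mB p)) := by
        rw [Finset.sum_congr rfl hsummand, Finset.sum_sub_distrib,
          hcostid T hnd hTS, hm]
        ring
      -- both parts are nonnegative
      have hpart1 : ∀ p : {B // B ∈ Bl},
          0 ≤ treeCost (u p.1) g T - treeCost (u p.1) g (TB p) := by
        intro p
        have := restr_cost_le (hu0 p.1 p.2) (husupp p.1) hg gmono T
        rw [hTBsome p] at this
        simp only [Option.elim] at this
        linarith
      have hpart2 : ∀ p : {B // B ∈ Bl}, 0 ≤ treeCost w g (TB p) - mB p := by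
        intro p
        have := (hmBall p (TB p) (hTBnodup p) (hTBleaves p)).1
        linarith
      have hnonneg : ∀ p ∈ Bl.attach,
          0 ≤ (treeCost (u p.1) g T - treeCost (u p.1) g (TB p))
            + (treeCost w g (TB p) - mB p) := by
        intro p _
        have := hpart1 p
        have := hpart2 p
        linarith
      have hmle : m ≤ treeCost w g T := by
        have := Finset.sum_nonneg hnonneg
        linarith
      refine ⟨hmle, ?_, ?_⟩
      · -- cost = m implies good
        intro heq
        have hzero : ∀ p ∈ Bl.attach,
            (treeCost (u p.1) g T - treeCost (u p.1) g (TB p))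
              + (treeCost w g (TB p) - mB p) = 0 := by
          rw [← Finset.sum_eq_zero_iff_of_nonneg hnonneg]
          rw [← hsum, heq]
          ring
        have hzero' : ∀ p : {B // B ∈ Bl},
            treeCost (u p.1) g T = treeCost (u p.1) g (TB p)
              ∧ treeCost w g (TB p) = mB p := by
          intro p
          have h1 := hpart1 p
          have h2 := hpart2 p
          have h3 := hzero p (Finset.mem_attach Bl p)
          constructor <;> linarith
        refine good_of_blocks T hnd (fun x hx => b1 x (hTS ▸ hx))
          (fun x hx y hy hyP => b4 x (hTS ▸ hx) y (hTS ▸ hy) hyP)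
          (fun x hx y hy hxy => tmin x (hTS ▸ hx) y (hTS ▸ hy) hxy) ?_
        intro x hx
        have hxS : x ∈ S := hTS ▸ hx
        set p : {B // B ∈ Bl} := ⟨bl x, hblBl x hxS⟩ with hp
        have hnode : ∃ N, IsSubtreeOf N T ∧ N.leaves = bl x := by
          by_cases hB2 : ∃ a ∈ bl x, ∃ b ∈ bl x, a ≠ b
          · by_contra hno
            push_neg at hno
            have hlt := restr_cost_lt (hu0 (bl x) p.2) (husupp (bl x))
              (hupos (bl x) p.2) hg gmono gcomb hB2 T hnd
              (hTS ▸ b2 x) hno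
            rw [hTBsome p] at hlt
            simp only [Option.elim] at hlt
            have := (hzero' p).1
            linarith
          · push_neg at hB2
            refine ⟨ClusterTree.leaf x, leaf_isSubtreeOf hx, ?_⟩
            rw [leaves_leaf]
            ext z
            rw [Finset.mem_singleton]
            constructor
            · intro h; exact h ▸ b1 x hxS
            · intro h; exact hB2 z h x (b1 x hxS)
        obtain ⟨N, hN, hNl⟩ := hnode
        have hTBN : TB p = N := by
          have h1 := restr_eq_of_node hnd hN hNl
          have h2 := hTBsome p
          rw [h1] at h2
          exact (Option.some.inj h2).symm
        have hgoodN : good w N := by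
          rw [← hTBN]
          exact ((hmBall p (TB p) (hTBnodup p) (hTBleaves p)).2).1 (hzero' p).2
        exact ⟨N, hN, hNl, hgoodN⟩
      · -- good implies cost = m
        intro hgood
        have hBnode : ∀ x ∈ T.leaves, ∃ N, IsSubtreeOf N T ∧ N.leaves = bl x := by
          refine blocks_of_good T hnd hgood (fun x hx => b1 x (hTS ▸ hx))
            (fun x hx => hTS ▸ b2 x)
            (fun x hx y hy => b3 x (hTS ▸ hx) y hy)
            (fun x hx y hy hxy hyP => b5 x y hyP hxy)
            (fun x hx y hy hwt => ?_)
          rw [hbl, Finset.mem_filter]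
          exact ⟨hTS ▸ hy, Or.inr hwt⟩
        have hzero : ∀ p ∈ Bl.attach,
            (treeCost (u p.1) g T - treeCost (u p.1) g (TB p))
              + (treeCost w g (TB p) - mB p) = 0 := by
          intro p _
          obtain ⟨z, hzS, hzB⟩ := hBlmem p.1 p.2
          obtain ⟨N, hN, hNl⟩ := hBnode z (hTS ▸ hzS)
          rw [hzB] at hNl
          have hTBN : TB p = N := by
            have h1 := restr_eq_of_node hnd hN hNl
            have h2 := hTBsome p
            rw [h1] at h2
            exact (Option.some.inj h2).symm
          have hd1 : treeCost (u p.1) g T = treeCost (u p.1) g (TB p) := by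
            rw [hTBN]
            exact cost_eq_of_node (husupp p.1) hnd hN hNl
          have hd2 : treeCost w g (TB p) = mB p := by
            refine (hmBall p (TB p) (hTBnodup p) (hTBleaves p)).2.2 ?_
            rw [hTBN]
            exact good_of_isSubtreeOf hN hgood
          rw [hd1, hd2]
          ring
        have := Finset.sum_eq_zero hzero
        rw [← hsum] at this
        linarith

/-! #### Transfer lemmas and the two directions -/

theorem treeCost_congr_offdiag {w w' : V → V → ℝ} {g : ℕ → ℕ → ℝ} :
    ∀ {T : ClusterTree V}, T.leavesList.Nodup →
    (∀ x ∈ T.leaves, ∀ y ∈ T.leaves, x ≠ y → w x y = w' x y) →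
    treeCost w g T = treeCost w' g T := by
  intro T
  induction T with
  | leaf v => intro _ _; rfl
  | node L R ihL ihR =>
    intro hnd h
    obtain ⟨hndL, hndR, hdisj⟩ := nodup_node hnd
    have hL : L.leaves ⊆ (ClusterTree.node L R).leaves := by
      rw [leaves_node]; exact Finset.subset_union_left
    have hR : R.leaves ⊆ (ClusterTree.node L R).leaves := by
      rw [leaves_node]; exact Finset.subset_union_right
    rw [treeCost, treeCost,
      ihL hndL (fun x hx y hy hxy => h x (hL hx) y (hL hy) hxy),
      ihR hndR (fun x hx y hy hxy => h x (hR hx) y (hR hy) hxy),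
      cutWeight_congr (fun x hx y hy => h x (hL hx) y (hR hy)
        (fun he => (Finset.disjoint_left.1 hdisj hx) (he ▸ hy)))]

theorem isGenerating_congr {w w' : V → V → ℝ} {T : ClusterTree V}
    (h : ∀ x y, x ≠ y → w x y = w' x y) :
    IsGenerating w T ↔ IsGenerating w' T := by
  constructor <;> intro ⟨W, h1, h2, h3⟩ <;> refine ⟨W, h1, h2, ?_⟩ <;>
    intro x y hx hy hxy
  · rw [← h x y hxy]; exact h3 x y hx hy hxy
  · rw [h x y hxy]; exact h3 x y hx hy hxy

/-- The conditions imply admissibility. -/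
theorem admissible_of_conditions (g : ℕ → ℕ → ℝ) (hg : ∀ a b : ℕ, 0 ≤ g a b)
    (h1 : ∀ (V : Type) [Fintype V] [DecidableEq V] (T T' : ClusterTree V),
        IsClusterTree T → IsClusterTree T' →
        treeCost (cliqueW V) g T = treeCost (cliqueW V) g T')
    (h2 : ∀ n1 n2 : ℕ, 1 ≤ n1 → 1 ≤ n2 → g n1 n2 = g n2 n1)
    (h3 : ∀ n1 n2 : ℕ, 1 ≤ n1 → 1 ≤ n2 → g n1 n2 < g (n1 + 1) n2) :
    Admissible g := by
  intro V _ _ w hw T hT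
  classical
  obtain ⟨d, f, hdu, hfmono, hfnn, hwdf, _hmin⟩ := hw
  obtain ⟨hd0, hdinj, hdsym, hdnn, hdtri⟩ := hdu
  set w' : V → V → ℝ := fun x y => if x = y then 0 else w x y with hw'
  have hoffd : ∀ x y, x ≠ y → w x y = w' x y := by
    intro x y hxy; rw [hw']; simp [hxy]
  have hsym : ∀ x y, w' x y = w' y x := by
    intro x y
    rcases eq_or_ne x y with h | h
    · rw [h]
    · rw [hw']
      simp only [if_neg h, if_neg (Ne.symm h)]
      rw [hwdf x y h, hwdf y x (Ne.symm h), hdsym]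
  have hdiag : ∀ x, w' x x = 0 := by intro x; rw [hw']; simp
  have hnn : ∀ x y, 0 ≤ w' x y := by
    intro x y
    rcases eq_or_ne x y with h | h
    · rw [h, hdiag]
    · rw [← hoffd x y h, hwdf x y h]
      exact hfnn _ (hdnn x y)
  have hult : ∀ x y z, x ≠ y → y ≠ z → x ≠ z →
      min (w' x y) (w' y z) ≤ w' x z := by
    intro x y z hxy hyz hxz
    rw [← hoffd x y hxy, ← hoffd y z hyz, ← hoffd x z hxz,
      hwdf x y hxy, hwdf y z hyz, hwdf x z hxz]
    have htr : d x z ≤ max (d x y) (d z y) := hdtri x z y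
    rcases le_total (d x y) (d z y) with hle | hle
    · rw [max_eq_right hle] at htr
      have := hfmono (d x z) (d z y) (hdnn x z) htr
      rw [hdsym z y] at this
      exact le_trans (min_le_right _ _) this
    · rw [max_eq_left hle] at htr
      have := hfmono (d x z) (d x y) (hdnn x z) htr
      exact le_trans (min_le_left _ _) this
  have gmono := gmono_of g h2 h3
  have gcomb := gcomb_of g h2 h3
  have hsplit := splitK g h1
  have huniv : (Finset.univ : Finset V).Nonempty := by
    obtain ⟨x, hx⟩ := leaves_nonempty T
    exact ⟨x, Finset.mem_univ x⟩
  obtain ⟨m, ⟨T0, hT0nd, hT0l, hT0g⟩, hall⟩ :=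
    main_induction g hg hsym hdiag hnn hult gmono gcomb hsplit Finset.univ huniv
  have hcosttr : ∀ T' : ClusterTree V, IsClusterTree T' →
      treeCost w g T' = treeCost w' g T' :=
    fun T' hT' => treeCost_congr_offdiag hT'.1
      (fun x _ y _ hxy => hoffd x y hxy)
  have hT0ct : IsClusterTree T0 := ⟨hT0nd, hT0l⟩
  have hT0cost : treeCost w' g T0 = m :=
    (hall T0 hT0nd hT0l).2.2 hT0g
  constructor
  · intro hminT
    have h1' : m ≤ treeCost w' g T := (hall T hT.1 hT.2).1
    have h2' : treeCost w' g T ≤ m := by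
      rw [← hT0cost, ← hcosttr T hT, ← hcosttr T0 hT0ct]
      exact hminT T0 hT0ct
    have heq : treeCost w' g T = m := le_antisymm h2' h1'
    have hgood : good w' T := (hall T hT.1 hT.2).2.1 heq
    rw [isGenerating_congr hoffd]
    exact isGenerating_of_good hsym hnn hT.1 hgood
  · intro hgen T' hT'
    have hgood : good w' T :=
      good_of_isGenerating hT.1 ((isGenerating_congr hoffd).1 hgen)
    have heq : treeCost w' g T = m := (hall T hT.1 hT.2).2.2 hgood
    rw [hcosttr T hT, hcosttr T' hT', heq]
    exact (hall T' hT'.1 hT'.2).1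

/-! #### The forward direction: deriving the three conditions -/

/-- Ultrametrics built from a level function. -/
theorem isUltrametric_levels (lv : V → ℕ) (D : ℕ → ℕ → ℝ)
    (hDsym : ∀ a b, D a b = D b a) (hDpos : ∀ a b, 0 < D a b)
    (hDtri : ∀ a b c, D a b ≤ max (D a c) (D b c)) :
    IsUltrametric (fun x y => if x = y then 0 else D (lv x) (lv y)) := by
  refine ⟨fun x => if_pos rfl, ?_, ?_, ?_, ?_⟩
  · intro x y h
    dsimp only at h
    by_contra hne
    rw [if_neg hne] at h
    exact absurd h (ne_of_gt (hDpos _ _))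
  · intro x y
    dsimp only
    rcases eq_or_ne x y with h | h
    · rw [if_pos h, if_pos h.symm]
    · rw [if_neg h, if_neg (Ne.symm h), hDsym]
  · intro x y
    dsimp only
    rcases eq_or_ne x y with h | h
    · rw [if_pos h]
    · rw [if_neg h]; exact (hDpos _ _).le
  · intro x y z
    dsimp only
    rcases eq_or_ne x y with hxy | hxy
    · rw [if_pos hxy]
      refine le_max_of_le_left ?_
      rcases eq_or_ne x z with h | h
      · rw [if_pos h]
      · rw [if_neg h]; exact (hDpos _ _).le
    · rw [if_neg hxy]
      rcases eq_or_ne x z with hxz | hxz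
      · -- z = x : d y z = d y x = D y x
        refine le_max_of_le_right ?_
        have hyz : y ≠ z := fun h => hxy (hxz ▸ h ▸ rfl)
        rw [if_neg hyz, ← hxz, hDsym]
      · rcases eq_or_ne y z with hyz | hyz
        · refine le_max_of_le_left ?_
          rw [if_neg hxz, ← hyz]
        · rw [if_neg hxz, if_neg hyz]
          exact hDtri _ _ _

/-- Condition (1) follows from admissibility. -/
theorem cond1_of_admissible (g : ℕ → ℕ → ℝ) (hadm : Admissible g) :
    ∀ (V : Type) [Fintype V] [DecidableEq V] (T T' : ClusterTree V),
      IsClusterTree T → IsClusterTree T' →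
      treeCost (cliqueW V) g T = treeCost (cliqueW V) g T' := by
  intro V _ _ T T' hT hT'
  have hw : GeneratedFromMinimalUltrametric (cliqueW V) := by
    refine ⟨fun x y => if x = y then 0 else 1, fun _ => 1,
      isUltrametric_levels (fun _ => 0) (fun _ _ => 1) (fun _ _ => rfl)
        (fun _ _ => one_pos) (fun _ _ _ => by simp), ?_, ?_, ?_, ?_⟩
    · intro a b _ _; exact le_rfl
    · intro a _; norm_num
    · intro x y hxy; rw [cliqueW, if_neg hxy]
    · intro u v u' v' huv huv' _
      dsimp only
      rw [if_neg huv, if_neg huv']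
  have hgen : ∀ T'' : ClusterTree V, IsGenerating (cliqueW V) T'' := by
    intro T''
    refine ⟨fun _ => 1, fun _ _ => by norm_num, fun _ _ _ _ _ => le_rfl, ?_⟩
    intro x y _ _ hxy
    rw [cliqueW, if_neg hxy]
  exact le_antisymm ((hadm V (cliqueW V) hw T hT).2 (hgen T) T' hT')
    ((hadm V (cliqueW V) hw T' hT').2 (hgen T') T hT)

/-- Packaging for caterpillar trees over a nonempty list. -/
theorem exists_tree_of_list (l : List V) (hne : l ≠ []) :
    ∃ TT : ClusterTree V, TT.leavesList = l := by
  obtain ⟨a, as, rfl⟩ := List.exists_cons_of_ne_nil hne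
  exact ⟨spineTree (ClusterTree.leaf a) as, by
    rw [leavesList_spineTree]; rfl⟩

/-- Condition (2) follows from admissibility. -/
theorem cond2_of_admissible (g : ℕ → ℕ → ℝ) (hadm : Admissible g) :
    ∀ n1 n2 : ℕ, 1 ≤ n1 → 1 ≤ n2 → g n1 n2 = g n2 n1 := by
  intro n1 n2 hn1 hn2
  classical
  -- the two-cluster graph on `Fin n1 ⊕ Fin n2`
  set V' := (Fin n1 ⊕ Fin n2) with hV'
  set lv : V' → ℕ := Sum.elim (fun _ => 0) (fun _ => 1) with hlv
  set D : ℕ → ℕ → ℝ := fun a b => if a = b then 1 else 2 with hD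
  set w : V' → V' → ℝ :=
    fun x y => if x = y then 0 else if lv x = lv y then 2 else 1 with hw
  have hDsym : ∀ a b, D a b = D b a := by
    intro a b; rw [hD]; dsimp only
    rcases eq_or_ne a b with h | h
    · rw [if_pos h, if_pos h.symm]
    · rw [if_neg h, if_neg (Ne.symm h)]
  have hDpos : ∀ a b, 0 < D a b := by
    intro a b; rw [hD]; dsimp only; split <;> norm_num
  have hDtri : ∀ a b c, D a b ≤ max (D a c) (D b c) := by
    intro a b c
    rw [hD]; dsimp only
    rcases eq_or_ne a b with h | h
    · rw [if_pos h]
      refine le_max_of_le_left ?_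
      split <;> norm_num
    · rw [if_neg h]
      rcases eq_or_ne a c with h' | h'
      · refine le_max_of_le_right ?_
        rw [if_neg (fun hbc : b = c => h (hbc ▸ h' ▸ rfl))]
      · refine le_max_of_le_left ?_
        rw [if_neg h']
  set f : ℝ → ℝ := fun a => if a ≤ 1 then 2 else 1 with hf
  have hwgen : GeneratedFromMinimalUltrametric w := by
    refine ⟨fun x y => if x = y then 0 else D (lv x) (lv y), f,
      isUltrametric_levels lv D hDsym hDpos hDtri, ?_, ?_, ?_, ?_⟩
    · intro a b ha hab
      rw [hf]; dsimp only
      split_ifs <;> linarith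
    · intro a _; rw [hf]; dsimp only; split_ifs <;> norm_num
    · intro x y hxy
      rw [hw, hf, hD]; dsimp only
      simp only [if_neg hxy]
      rcases eq_or_ne (lv x) (lv y) with h | h
      · simp only [if_pos h]
        norm_num
      · simp only [if_neg h]
        norm_num
    · intro u v u' v' huv huv' heq
      dsimp only at heq ⊢
      rw [if_neg huv, if_neg huv'] at heq ⊢
      rw [hD] at heq ⊢; dsimp only at heq ⊢
      rw [hf] at heq; dsimp only at heq
      rcases eq_or_ne (lv u) (lv v) with h | h <;>
        rcases eq_or_ne (lv u') (lv v') with h' | h'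
      · rw [if_pos h, if_pos h']
      · exfalso
        rw [if_pos h, if_neg h'] at heq
        norm_num at heq
      · exfalso
        rw [if_neg h, if_pos h'] at heq
        norm_num at heq
      · rw [if_neg h, if_neg h']
  -- the two caterpillars
  obtain ⟨TA, hTAl⟩ := exists_tree_of_list ((List.finRange n1).map Sum.inl : List V')
    (by
      intro h
      have := congrArg List.length h
      simp [List.length_finRange] at this
      omega)
  obtain ⟨TB, hTBl⟩ := exists_tree_of_list ((List.finRange n2).map Sum.inr : List V')
    (by
      intro h
      have := congrArg List.length h
      simp [List.length_finRange] at this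
      omega)
  have hTAnd : TA.leavesList.Nodup := by
    rw [hTAl]
    exact (List.nodup_finRange n1).map (fun a b => Sum.inl.inj)
  have hTBnd : TB.leavesList.Nodup := by
    rw [hTBl]
    exact (List.nodup_finRange n2).map (fun a b => Sum.inr.inj)
  have hmemA : ∀ x ∈ TA.leaves, ∃ i, x = Sum.inl i := by
    intro x hx
    rw [mem_leaves, hTAl, List.mem_map] at hx
    obtain ⟨i, _, hi⟩ := hx
    exact ⟨i, hi.symm⟩
  have hmemB : ∀ x ∈ TB.leaves, ∃ i, x = Sum.inr i := by
    intro x hx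
    rw [mem_leaves, hTBl, List.mem_map] at hx
    obtain ⟨i, _, hi⟩ := hx
    exact ⟨i, hi.symm⟩
  have hdisj : Disjoint TA.leaves TB.leaves := by
    rw [Finset.disjoint_left]
    intro a haA haB
    obtain ⟨i, hi⟩ := hmemA a haA
    obtain ⟨j, hj⟩ := hmemB a haB
    rw [hi] at hj
    exact Sum.inl_ne_inr hj
  have hcardA : TA.leaves.card = n1 := by
    rw [card_leaves hTAnd, hTAl]
    simp [List.length_finRange]
  have hcardB : TB.leaves.card = n2 := by
    rw [card_leaves hTBnd, hTBl]
    simp [List.length_finRange]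
  have hunivAB : TA.leaves ∪ TB.leaves = Finset.univ := by
    ext v
    simp only [Finset.mem_union, Finset.mem_univ, iff_true]
    cases v with
    | inl i =>
      left
      rw [mem_leaves, hTAl, List.mem_map]
      exact ⟨i, List.mem_finRange i, rfl⟩
    | inr j =>
      right
      rw [mem_leaves, hTBl, List.mem_map]
      exact ⟨j, List.mem_finRange j, rfl⟩
  set T : ClusterTree V' := ClusterTree.node TA TB with hT
  set T' : ClusterTree V' := ClusterTree.node TB TA with hT'
  have hTct : IsClusterTree T := by
    refine ⟨nodup_node_of hTAnd hTBnd hdisj, ?_⟩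
    rw [hT, leaves_node, hunivAB]
  have hT'ct : IsClusterTree T' := by
    refine ⟨nodup_node_of hTBnd hTAnd hdisj.symm, ?_⟩
    rw [hT', leaves_node, Finset.union_comm, hunivAB]
  -- weights facts
  have hwsym : ∀ x y, w x y = w y x := by
    intro x y
    rcases eq_or_ne x y with h | h
    · rw [h]
    · rw [hw]; dsimp only
      rw [if_neg h, if_neg (Ne.symm h)]
      rcases eq_or_ne (lv x) (lv y) with h2 | h2
      · rw [if_pos h2, if_pos h2.symm]
      · rw [if_neg h2, if_neg (Ne.symm h2)]
  have hwnn : ∀ x y, 0 ≤ w x y := by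
    intro x y
    rw [hw]; dsimp only
    split_ifs <;> norm_num
  have hcross : ∀ x ∈ TA.leaves, ∀ y ∈ TB.leaves, w x y = 1 := by
    intro x hx y hy
    obtain ⟨i, hi⟩ := hmemA x hx
    obtain ⟨j, hj⟩ := hmemB y hy
    rw [hw]; dsimp only
    rw [if_neg (by rw [hi, hj]; exact Sum.inl_ne_inr), if_neg (by
      rw [hi, hj, hlv]; simp)]
  have hinA : ∀ x ∈ TA.leaves, ∀ y ∈ TA.leaves, x ≠ y → w x y = 2 := by
    intro x hx y hy hxy
    obtain ⟨i, hi⟩ := hmemA x hx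
    obtain ⟨j, hj⟩ := hmemA y hy
    rw [hw]; dsimp only
    rw [if_neg hxy, if_pos (by rw [hi, hj, hlv]; simp)]
  have hinB : ∀ x ∈ TB.leaves, ∀ y ∈ TB.leaves, x ≠ y → w x y = 2 := by
    intro x hx y hy hxy
    obtain ⟨i, hi⟩ := hmemB x hx
    obtain ⟨j, hj⟩ := hmemB y hy
    rw [hw]; dsimp only
    rw [if_neg hxy, if_pos (by rw [hi, hj, hlv]; simp)]
  -- both trees are generating
  have hgoodT : good w T := by
    refine ⟨fun x hx y hy x' hx' y' hy' => by
        rw [hcross x hx y hy, hcross x' hx' y' hy'],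
      fun x hx y hy u hu v hv huv => by
        rw [hcross x hx y hy, hinA u hu v hv huv]; norm_num,
      fun x hx y hy u hu v hv huv => by
        rw [hcross x hx y hy, hinB u hu v hv huv]; norm_num,
      good_of_const TA hTAnd hinA, good_of_const TB hTBnd hinB⟩
  have hgoodT' : good w T' := by
    refine ⟨fun x hx y hy x' hx' y' hy' => by
        rw [hwsym x y, hwsym x' y', hcross y hy x hx, hcross y' hy' x' hx'],
      fun x hx y hy u hu v hv huv => by
        rw [hwsym x y, hcross y hy x hx, hinB u hu v hv huv]; norm_num,
      fun x hx y hy u hu v hv huv => by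
        rw [hwsym x y, hcross y hy x hx, hinA u hu v hv huv]; norm_num,
      good_of_const TB hTBnd hinB, good_of_const TA hTAnd hinA⟩
  have hgenT := isGenerating_of_good hwsym hwnn hTct.1 hgoodT
  have hgenT' := isGenerating_of_good hwsym hwnn hT'ct.1 hgoodT'
  have hcosteq : treeCost w g T = treeCost w g T' :=
    le_antisymm ((hadm V' w hwgen T hTct).2 hgenT T' hT'ct)
      ((hadm V' w hwgen T' hT'ct).2 hgenT' T hTct)
  -- compute the costs
  have hcutAB : cutWeight w TA.leaves TB.leaves = (n1 : ℝ) * n2 := by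
    rw [cutWeight_const (c := 1) hcross, hcardA, hcardB, mul_one]
  have hcutBA : cutWeight w TB.leaves TA.leaves = (n1 : ℝ) * n2 := by
    rw [cutWeight_const (c := 1) (fun x hx y hy => by
      rw [hwsym x y]; exact hcross y hy x hx), hcardA, hcardB, mul_one]
    ring
  rw [hT, hT', treeCost, treeCost, hcutAB, hcutBA, hcardA, hcardB] at hcosteq
  have hn1n2 : (0 : ℝ) < (n1 : ℝ) * n2 := by
    have : (0:ℝ) < (n1:ℝ) := by exact_mod_cast hn1
    have : (0:ℝ) < (n2:ℝ) := by exact_mod_cast hn2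
    positivity
  have : (n1 : ℝ) * n2 * g n1 n2 = (n1 : ℝ) * n2 * g n2 n1 := by linarith
  exact mul_left_cancel₀ (ne_of_gt hn1n2) this

theorem cutWeight_union_left {w : V → V → ℝ} {A B C : Finset V}
    (h : Disjoint A B) :
    cutWeight w (A ∪ B) C = cutWeight w A C + cutWeight w B C := by
  rw [cutWeight, cutWeight, cutWeight, Finset.sum_union h]

/-- Condition (3) follows from admissibility (given the split relation). -/
theorem cond3_of_admissible (g : ℕ → ℕ → ℝ) (hadm : Admissible g)
    (hsplit : ∀ a b : ℕ, 1 ≤ a → 1 ≤ b → cliqueTreeCost g (a + b)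
      = (a : ℝ) * b * g a b + cliqueTreeCost g a + cliqueTreeCost g b) :
    ∀ n1 n2 : ℕ, 1 ≤ n1 → 1 ≤ n2 → g n1 n2 < g (n1 + 1) n2 := by
  intro n1 n2 hn1 hn2
  classical
  set V' := ((Fin n1 ⊕ Fin n2) ⊕ Fin 1) with hV'
  set lv : V' → ℕ :=
    Sum.elim (Sum.elim (fun _ => 0) (fun _ => 1)) (fun _ => 2) with hlv
  set zed : V' := Sum.inr 0 with hzed
  set D : ℕ → ℕ → ℝ :=
    fun a b => if a = 2 ∨ b = 2 then 3 else if a = b then 1 else 2 with hD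
  set f : ℝ → ℝ := fun a => if a ≤ 1 then 3 else if a ≤ 2 then 2 else 1 with hf
  set w : V' → V' → ℝ := fun x y => if x = y then 0 else
    if lv x = 2 ∨ lv y = 2 then 1 else if lv x = lv y then 3 else 2 with hw
  have hDsym : ∀ a b, D a b = D b a := by
    intro a b; rw [hD]; dsimp only
    by_cases h : a = 2 ∨ b = 2
    · rw [if_pos h, if_pos h.symm]
    · rw [if_neg h, if_neg (fun hc : b = 2 ∨ a = 2 => h hc.symm)]
      rcases eq_or_ne a b with h2 | h2
      · rw [if_pos h2, if_pos h2.symm]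
      · rw [if_neg h2, if_neg (Ne.symm h2)]
  have hDpos : ∀ a b, 0 < D a b := by
    intro a b; rw [hD]; dsimp only; split_ifs <;> norm_num
  have hD1 : ∀ a b, (1:ℝ) ≤ D a b := by
    intro a b; rw [hD]; dsimp only; split_ifs <;> norm_num
  have hDtri : ∀ a b c, D a b ≤ max (D a c) (D b c) := by
    intro a b c
    by_cases hab : a = 2 ∨ b = 2
    · rcases hab with ha | hb
      · refine le_max_of_le_left ?_
        rw [hD]; dsimp only
        rw [if_pos (Or.inl ha), if_pos (Or.inl ha)]
      · refine le_max_of_le_right ?_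
        rw [hD]; dsimp only
        rw [if_pos (Or.inr hb), if_pos (Or.inl hb)]
    · push_neg at hab
      obtain ⟨ha2, hb2⟩ := hab
      by_cases habe : a = b
      · refine le_max_of_le_left ?_
        rw [hD]; dsimp only
        rw [if_neg (by tauto), if_pos habe]
        split_ifs <;> norm_num
      · by_cases hc2 : c = 2
        · refine le_max_of_le_left ?_
          rw [hD]; dsimp only
          rw [if_neg (by tauto), if_neg habe, if_pos (Or.inr hc2)]
          norm_num
        · by_cases hac : a = c
          · refine le_max_of_le_right ?_
            rw [hD]; dsimp only
            rw [if_neg (by tauto), if_neg habe,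
              if_neg (by tauto : ¬(b = 2 ∨ c = 2)),
              if_neg (fun hbc : b = c => habe (by rw [hac, ← hbc]))]
          · refine le_max_of_le_left ?_
            rw [hD]; dsimp only
            rw [if_neg (by tauto), if_neg habe,
              if_neg (by tauto : ¬(a = 2 ∨ c = 2)), if_neg hac]
  have hf1 : f 1 = 3 := by rw [hf]; norm_num
  have hf2 : f 2 = 2 := by rw [hf]; norm_num
  have hf3 : f 3 = 1 := by rw [hf]; norm_num
  have hDval : ∀ a b, D a b = 1 ∨ D a b = 2 ∨ D a b = 3 := by
    intro a b; rw [hD]; dsimp only; split_ifs <;> tauto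
  have hwgen : GeneratedFromMinimalUltrametric w := by
    refine ⟨fun x y => if x = y then 0 else D (lv x) (lv y), f,
      isUltrametric_levels lv D hDsym hDpos hDtri, ?_, ?_, ?_, ?_⟩
    · intro a b ha hab
      rw [hf]; dsimp only
      split_ifs <;> linarith
    · intro a _; rw [hf]; dsimp only; split_ifs <;> norm_num
    · intro x y hxy
      rw [hw]; dsimp only
      simp only [if_neg hxy]
      rw [hD, hf]; dsimp only
      by_cases h2 : lv x = 2 ∨ lv y = 2
      · simp only [if_pos h2]
        try norm_num
      · simp only [if_neg h2]
        rcases eq_or_ne (lv x) (lv y) with h | h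
        · simp only [if_pos h]
          try norm_num
        · simp only [if_neg h]
          try norm_num
    · intro u v u' v' huv huv' heq
      dsimp only at heq ⊢
      rw [if_neg huv, if_neg huv'] at heq ⊢
      rcases hDval (lv u) (lv v) with h | h | h <;>
        rcases hDval (lv u') (lv v') with h' | h' | h' <;>
        rw [h, h'] at heq ⊢
      · exfalso; rw [hf1, hf2] at heq; norm_num at heq
      · exfalso; rw [hf1, hf3] at heq; norm_num at heq
      · exfalso; rw [hf2, hf1] at heq; norm_num at heq
      · exfalso; rw [hf2, hf3] at heq; norm_num at heq
      · exfalso; rw [hf3, hf1] at heq; norm_num at heq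
      · exfalso; rw [hf3, hf2] at heq; norm_num at heq
  -- the trees
  obtain ⟨TA, hTAl⟩ := exists_tree_of_list
    ((List.finRange n1).map (fun i => (Sum.inl (Sum.inl i) : V')))
    (by
      intro h
      have := congrArg List.length h
      simp [List.length_finRange] at this
      omega)
  obtain ⟨TB, hTBl⟩ := exists_tree_of_list
    ((List.finRange n2).map (fun i => (Sum.inl (Sum.inr i) : V')))
    (by
      intro h
      have := congrArg List.length h
      simp [List.length_finRange] at this
      omega)
  have hTAnd : TA.leavesList.Nodup := by
    rw [hTAl]
    exact (List.nodup_finRange n1).map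
      (fun a b h => Sum.inl.inj (Sum.inl.inj h))
  have hTBnd : TB.leavesList.Nodup := by
    rw [hTBl]
    exact (List.nodup_finRange n2).map
      (fun a b h => Sum.inr.inj (Sum.inl.inj h))
  have hmemA : ∀ x ∈ TA.leaves, ∃ i, x = Sum.inl (Sum.inl i) := by
    intro x hx
    rw [mem_leaves, hTAl, List.mem_map] at hx
    obtain ⟨i, _, hi⟩ := hx
    exact ⟨i, hi.symm⟩
  have hmemB : ∀ x ∈ TB.leaves, ∃ i, x = Sum.inl (Sum.inr i) := by
    intro x hx
    rw [mem_leaves, hTBl, List.mem_map] at hx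
    obtain ⟨i, _, hi⟩ := hx
    exact ⟨i, hi.symm⟩
  have hlvA : ∀ x ∈ TA.leaves, lv x = 0 := by
    intro x hx
    obtain ⟨i, hi⟩ := hmemA x hx
    rw [hi, hlv]; rfl
  have hlvB : ∀ x ∈ TB.leaves, lv x = 1 := by
    intro x hx
    obtain ⟨i, hi⟩ := hmemB x hx
    rw [hi, hlv]; rfl
  have hlvz : lv zed = 2 := by rw [hzed, hlv]; rfl
  have hzedA : zed ∉ TA.leaves := by
    intro h
    obtain ⟨i, hi⟩ := hmemA zed h
    rw [hzed] at hi
    exact Sum.inr_ne_inl hi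
  have hzedB : zed ∉ TB.leaves := by
    intro h
    obtain ⟨i, hi⟩ := hmemB zed h
    rw [hzed] at hi
    exact Sum.inr_ne_inl hi
  have hdisjAB : Disjoint TA.leaves TB.leaves := by
    rw [Finset.disjoint_left]
    intro a haA haB
    obtain ⟨i, hi⟩ := hmemA a haA
    obtain ⟨j, hj⟩ := hmemB a haB
    rw [hi] at hj
    exact Sum.inl_ne_inr (Sum.inl.inj hj)
  have hcardA : TA.leaves.card = n1 := by
    rw [card_leaves hTAnd, hTAl]
    simp [List.length_finRange]
  have hcardB : TB.leaves.card = n2 := by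
    rw [card_leaves hTBnd, hTBl]
    simp [List.length_finRange]
  -- weight facts
  have hwsym : ∀ x y, w x y = w y x := by
    intro x y
    rcases eq_or_ne x y with h | h
    · rw [h]
    · rw [hw]; dsimp only
      rw [if_neg h, if_neg (Ne.symm h)]
      by_cases h2 : lv x = 2 ∨ lv y = 2
      · rw [if_pos h2, if_pos h2.symm]
      · rw [if_neg h2, if_neg (fun hc : lv y = 2 ∨ lv x = 2 => h2 hc.symm)]
        rcases eq_or_ne (lv x) (lv y) with h3 | h3
        · rw [if_pos h3, if_pos h3.symm]
        · rw [if_neg h3, if_neg (Ne.symm h3)]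
  have hwnn : ∀ x y, 0 ≤ w x y := by
    intro x y
    rw [hw]; dsimp only
    split_ifs <;> norm_num
  have hwAB : ∀ x ∈ TA.leaves, ∀ y ∈ TB.leaves, w x y = 2 := by
    intro x hx y hy
    have hxy : x ≠ y := fun h => (Finset.disjoint_left.1 hdisjAB hx) (h ▸ hy)
    rw [hw]; dsimp only
    rw [if_neg hxy, if_neg (by rw [hlvA x hx, hlvB y hy]; norm_num),
      if_neg (by rw [hlvA x hx, hlvB y hy]; norm_num)]
  have hwAA : ∀ x ∈ TA.leaves, ∀ y ∈ TA.leaves, x ≠ y → w x y = 3 := by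
    intro x hx y hy hxy
    rw [hw]; dsimp only
    rw [if_neg hxy, if_neg (by rw [hlvA x hx, hlvA y hy]; norm_num),
      if_pos (by rw [hlvA x hx, hlvA y hy])]
  have hwBB : ∀ x ∈ TB.leaves, ∀ y ∈ TB.leaves, x ≠ y → w x y = 3 := by
    intro x hx y hy hxy
    rw [hw]; dsimp only
    rw [if_neg hxy, if_neg (by rw [hlvB x hx, hlvB y hy]; norm_num),
      if_pos (by rw [hlvB x hx, hlvB y hy])]
  have hwz : ∀ x, x ≠ zed → w x zed = 1 := by
    intro x hx
    rw [hw]; dsimp only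
    rw [if_neg hx, if_pos (Or.inr hlvz)]
  have hwz' : ∀ x, x ≠ zed → w zed x = 1 := by
    intro x hx
    rw [hwsym]; exact hwz x hx
  -- assemble the trees
  set LL : ClusterTree V' := ClusterTree.node TA TB with hLL
  set T : ClusterTree V' := ClusterTree.node LL (ClusterTree.leaf zed) with hT
  set L' : ClusterTree V' := ClusterTree.node TA (ClusterTree.leaf zed) with hL'
  set T' : ClusterTree V' := ClusterTree.node L' TB with hT'
  have hLLnd : LL.leavesList.Nodup := nodup_node_of hTAnd hTBnd hdisjAB
  have hzedLL : zed ∉ LL.leaves := by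
    rw [hLL, leaves_node, Finset.mem_union]
    rintro (h | h)
    · exact hzedA h
    · exact hzedB h
  have hTnd : T.leavesList.Nodup := by
    refine nodup_node_of hLLnd (by simp [ClusterTree.leavesList]) ?_
    rw [leaves_leaf, Finset.disjoint_singleton_right]
    exact hzedLL
  have hL'nd : L'.leavesList.Nodup := by
    refine nodup_node_of hTAnd (by simp [ClusterTree.leavesList]) ?_
    rw [leaves_leaf, Finset.disjoint_singleton_right]
    exact hzedA
  have hdisjL'B : Disjoint L'.leaves TB.leaves := by
    rw [hL', leaves_node, leaves_leaf, Finset.disjoint_union_left,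
      Finset.disjoint_singleton_left]
    exact ⟨hdisjAB, hzedB⟩
  have hT'nd : T'.leavesList.Nodup := nodup_node_of hL'nd hTBnd hdisjL'B
  have huniv : ∀ v : V', v ∈ TA.leaves ∪ TB.leaves ∪ {zed} := by
    intro v
    simp only [Finset.mem_union, Finset.mem_singleton]
    rcases v with (i | i) | i
    · left; left
      rw [mem_leaves, hTAl, List.mem_map]
      exact ⟨i, List.mem_finRange i, rfl⟩
    · left; right
      rw [mem_leaves, hTBl, List.mem_map]
      exact ⟨i, List.mem_finRange i, rfl⟩
    · right
      rw [hzed]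
      congr
      omega
  have hTleaves : T.leaves = Finset.univ := by
    ext v
    simp only [Finset.mem_univ, iff_true]
    rw [hT, leaves_node, hLL, leaves_node, leaves_leaf]
    exact huniv v
  have hT'leaves : T'.leaves = Finset.univ := by
    ext v
    simp only [Finset.mem_univ, iff_true]
    rw [hT', leaves_node, hL', leaves_node, leaves_leaf]
    have := huniv v
    simp only [Finset.mem_union, Finset.mem_singleton] at this ⊢
    tauto
  have hTct : IsClusterTree T := ⟨hTnd, hTleaves⟩
  have hT'ct : IsClusterTree T' := ⟨hT'nd, hT'leaves⟩
  -- T is generating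
  have hLLleavesmem : ∀ x ∈ LL.leaves, x ≠ zed := by
    intro x hx h
    exact hzedLL (h ▸ hx)
  have hLLpairs : ∀ u ∈ LL.leaves, ∀ v ∈ LL.leaves, u ≠ v → 2 ≤ w u v := by
    intro u hu v hv huv
    rw [hLL, leaves_node, Finset.mem_union] at hu hv
    rcases hu with hu | hu <;> rcases hv with hv | hv
    · rw [hwAA u hu v hv huv]; norm_num
    · rw [hwAB u hu v hv]
    · rw [hwsym, hwAB v hv u hu]
    · rw [hwBB u hu v hv huv]; norm_num
  have hgoodT : good w T := by
    have hcrossz : ∀ x ∈ LL.leaves, ∀ y ∈ (ClusterTree.leaf zed).leaves,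
        w x y = 1 := by
      intro x hx y hy
      rw [leaves_leaf, Finset.mem_singleton] at hy
      rw [hy]
      exact hwz x (hLLleavesmem x hx)
    refine ⟨fun x hx y hy x' hx' y' hy' => by
        rw [hcrossz x hx y hy, hcrossz x' hx' y' hy'],
      fun x hx y hy u hu v hv huv => by
        rw [hcrossz x hx y hy]
        have := hLLpairs u hu v hv huv
        linarith,
      fun x hx y hy u hu v hv huv => by
        exfalso
        rw [leaves_leaf, Finset.mem_singleton] at hu hv
        exact huv (hu.trans hv.symm), ?_, trivial⟩
    refine ⟨fun x hx y hy x' hx' y' hy' => by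
        rw [hwAB x hx y hy, hwAB x' hx' y' hy'],
      fun x hx y hy u hu v hv huv => by
        rw [hwAB x hx y hy, hwAA u hu v hv huv]; norm_num,
      fun x hx y hy u hu v hv huv => by
        rw [hwAB x hx y hy, hwBB u hu v hv huv]; norm_num,
      good_of_const TA hTAnd hwAA, good_of_const TB hTBnd hwBB⟩
  have hgenT := isGenerating_of_good hwsym hwnn hTnd hgoodT
  -- T' is not generating
  have hnotgen : ¬ IsGenerating w T' := by
    rintro ⟨W, _, _, hlca⟩
    obtain ⟨i0, hi0⟩ : ∃ i : Fin n1, True := ⟨⟨0, by omega⟩, trivial⟩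
    obtain ⟨j0, hj0⟩ : ∃ j : Fin n2, True := ⟨⟨0, by omega⟩, trivial⟩
    set a : V' := Sum.inl (Sum.inl i0) with ha
    set b : V' := Sum.inl (Sum.inr j0) with hb
    have haA : a ∈ TA.leaves := by
      rw [mem_leaves, hTAl, List.mem_map]
      exact ⟨i0, List.mem_finRange i0, rfl⟩
    have hbB : b ∈ TB.leaves := by
      rw [mem_leaves, hTBl, List.mem_map]
      exact ⟨j0, List.mem_finRange j0, rfl⟩
    have haL' : a ∈ L'.leaves := by
      rw [hL', leaves_node, Finset.mem_union]
      exact Or.inl haA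
    have hzedL' : zed ∈ L'.leaves := by
      rw [hL', leaves_node, leaves_leaf, Finset.mem_union]
      exact Or.inr (Finset.mem_singleton_self zed)
    have hab : a ≠ b := by
      rw [ha, hb]
      intro h
      exact Sum.inl_ne_inr (Sum.inl.inj h)
    have hzb : zed ≠ b := by
      rw [hzed, hb]
      intro h
      exact Sum.inr_ne_inl h
    have haT' : a ∈ T'.leaves := by rw [hT'leaves]; exact Finset.mem_univ a
    have hbT' : b ∈ T'.leaves := by rw [hT'leaves]; exact Finset.mem_univ b
    have hzT' : zed ∈ T'.leaves := by rw [hT'leaves]; exact Finset.mem_univ zed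
    have h1 : w a b = W T' := by
      rw [hlca a b haT' hbT' hab, hT',
        lcaSubtree_node_cross_left hT'nd haL' hbB]
    have h2 : w zed b = W T' := by
      rw [hlca zed b hzT' hbT' hzb, hT',
        lcaSubtree_node_cross_left hT'nd hzedL' hbB]
    rw [hwAB a haA b hbB] at h1
    rw [hwz' b (Ne.symm hzb)] at h2
    rw [← h1] at h2
    norm_num at h2
  -- strict cost comparison
  have hminT := (hadm V' w hwgen T hTct).2 hgenT
  have hnotminT' : ¬ (∀ T'' : ClusterTree V', IsClusterTree T'' →
      treeCost w g T' ≤ treeCost w g T'') := by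
    intro h
    exact hnotgen ((hadm V' w hwgen T' hT'ct).1 h)
  push_neg at hnotminT'
  obtain ⟨T'', hT''ct, hT''lt⟩ := hnotminT'
  have hlt : treeCost w g T < treeCost w g T' :=
    lt_of_le_of_lt (hminT T'' hT''ct) hT''lt
  -- compute both costs
  have hcardLL : LL.leaves.card = n1 + n2 := by
    rw [hLL, card_leaves_node hLLnd, hcardA, hcardB]
  have hcardL' : L'.leaves.card = n1 + 1 := by
    rw [hL', card_leaves_node hL'nd, hcardA, leaves_leaf, Finset.card_singleton]
  have hcutLLz : cutWeight w LL.leaves (ClusterTree.leaf zed).leaves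
      = ((n1 : ℝ) + n2) * 1 := by
    rw [cutWeight_const (c := 1) (fun x hx y hy => by
      rw [leaves_leaf, Finset.mem_singleton] at hy
      rw [hy]; exact hwz x (hLLleavesmem x hx)), hcardLL, leaves_leaf,
      Finset.card_singleton]
    push_cast
    ring
  have hcutAB : cutWeight w TA.leaves TB.leaves = (n1 : ℝ) * n2 * 2 := by
    rw [cutWeight_const (c := 2) hwAB, hcardA, hcardB]
  have hcutAz : cutWeight w TA.leaves (ClusterTree.leaf zed).leaves
      = (n1 : ℝ) * 1 := by
    rw [cutWeight_const (c := 1) (fun x hx y hy => by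
      rw [leaves_leaf, Finset.mem_singleton] at hy
      rw [hy]; exact hwz x (fun h => hzedA (h ▸ hx))), hcardA, leaves_leaf,
      Finset.card_singleton]
    push_cast
    ring
  have hcutzB : cutWeight w ({zed} : Finset V') TB.leaves = (n2 : ℝ) := by
    rw [cutWeight_const (c := 1) (fun x hx y hy => by
      rw [Finset.mem_singleton] at hx
      rw [hx]; exact hwz' y (fun h => hzedB (h ▸ hy))), hcardB,
      Finset.card_singleton]
    push_cast
    ring
  have hcutL'B : cutWeight w L'.leaves TB.leaves
      = (n1 : ℝ) * n2 * 2 + n2 := by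
    rw [hL', leaves_node, leaves_leaf,
      cutWeight_union_left (by
        rw [Finset.disjoint_singleton_right]; exact hzedA),
      hcutAB, hcutzB]
  have hcostT : treeCost w g T = ((n1 : ℝ) + n2) * g (n1 + n2) 1
      + (n1 : ℝ) * n2 * 2 * g n1 n2 + treeCost w g TA + treeCost w g TB := by
    rw [hT, treeCost, hcutLLz, hcardLL, leaves_leaf, Finset.card_singleton]
    rw [show treeCost w g (ClusterTree.leaf zed) = 0 from rfl]
    rw [hLL, treeCost, hcutAB, hcardA, hcardB]
    ring
  have hcostT' : treeCost w g T' = ((n1 : ℝ) * n2 * 2 + n2) * g (n1 + 1) n2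
      + (n1 : ℝ) * g n1 1 + treeCost w g TA + treeCost w g TB := by
    rw [hT', treeCost, hcutL'B, hcardL', hcardB]
    rw [hL', treeCost, hcutAz, hcardA, leaves_leaf, Finset.card_singleton]
    rw [show treeCost w g (ClusterTree.leaf zed) = 0 from rfl]
    ring
  rw [hcostT, hcostT'] at hlt
  -- the split relations
  have e1 := hsplit (n1 + n2) 1 (by omega) le_rfl
  have e2 := hsplit (n1 + 1) n2 (by omega) hn2
  have e3 := hsplit n1 n2 hn1 hn2
  have e4 := hsplit n1 1 hn1 le_rfl
  rw [show n1 + 1 + n2 = n1 + n2 + 1 from by omega] at e2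
  have hkey : (n1 : ℝ) * n2 * g n1 n2 < (n1 : ℝ) * n2 * g (n1 + 1) n2 := by
    push_cast at e1 e2 e3 e4 hlt ⊢
    nlinarith [e1, e2, e3, e4, hlt]
  have hn1n2 : (0 : ℝ) < (n1 : ℝ) * n2 := by
    have h1 : (0:ℝ) < (n1:ℝ) := by exact_mod_cast hn1
    have h2 : (0:ℝ) < (n2:ℝ) := by exact_mod_cast hn2
    positivity
  exact lt_of_mul_lt_mul_left hkey hn1n2.le

end CKMMAux

/-- Theorem 1, CKMM: characterization of admissible cost functions.
A cost function of the form (1,2) is admissible iff (1) all cluster trees of a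
unit-weight clique have the same cost, (2) `g` is symmetric, and (3) `g` is strictly
increasing in its arguments. -/
theorem statement0 (g : ℕ → ℕ → ℝ) (hg : ∀ a b : ℕ, 0 ≤ g a b) :
    Admissible g ↔
      ((∀ (V : Type) [Fintype V] [DecidableEq V] (T T' : ClusterTree V),
          IsClusterTree T → IsClusterTree T' →
          treeCost (cliqueW V) g T = treeCost (cliqueW V) g T') ∧
        (∀ n1 n2 : ℕ, 1 ≤ n1 → 1 ≤ n2 → g n1 n2 = g n2 n1) ∧
        (∀ n1 n2 : ℕ, 1 ≤ n1 → 1 ≤ n2 → g n1 n2 < g (n1 + 1) n2)) := by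
  constructor
  · intro hadm
    have c1 := CKMMAux.cond1_of_admissible g hadm
    exact ⟨c1, CKMMAux.cond2_of_admissible g hadm,
      CKMMAux.cond3_of_admissible g hadm (CKMMAux.splitK g c1)⟩
  · rintro ⟨c1, c2, c3⟩
    exact CKMMAux.admissible_of_conditions g hg c1 c2 c3
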